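/- arXiv:2305.04494 — 4 statements merged into one kernel-verified Lean document; each statement's English description precedes it below -/
import Mathlib

section
/- Let 0 ≤ θ < π/2, let A and B be n×n complex matrices in the sector class S_θ, let 0 < m ≤ M with mI ≤ ℜA ≤ MI and mI ≤ ℜB ≤ MI, and let v ∈ [0,1]. Then ‖A∇_vB‖ ≤ sec³θ · K · ‖A!_vB‖, where ‖·‖ is the spectral norm and K = (M+m)²/(4mM). (This is the σ₁ = ∇_v, σ₂ = !_v, spectral-norm instance of the paper's unitarily invariant norm theorem, first bullet.) -/
open Matrix
open scoped ComplexOrder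

/-- The real part `(A + Aᴴ)/2` of a complex matrix. -/
noncomputable def matRe {n : ℕ} (A : Matrix (Fin n) (Fin n) ℂ) : Matrix (Fin n) (Fin n) ℂ :=
  (2⁻¹ : ℂ) • (A + Aᴴ)

/-- The imaginary part `(A - Aᴴ)/(2i)` of a complex matrix. -/
noncomputable def matIm {n : ℕ} (A : Matrix (Fin n) (Fin n) ℂ) : Matrix (Fin n) (Fin n) ℂ :=
  (2 * Complex.I)⁻¹ • (A - Aᴴ)

/-- Loewner order: `Y - X` is positive semidefinite. -/
def loewnerLE {n : ℕ} (X Y : Matrix (Fin n) (Fin n) ℂ) : Prop := (Y - X).PosSemidef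

/-- `A` lies in the sector class `S_θ`: its real part is positive definite and for all `x`,
`|⟨(ℑA)x, x⟩| ≤ tan θ · ⟨(ℜA)x, x⟩`. -/
def sectorClass {n : ℕ} (θ : ℝ) (A : Matrix (Fin n) (Fin n) ℂ) : Prop :=
  (matRe A).PosDef ∧
    ∀ x : Fin n → ℂ,
      |(star x ⬝ᵥ (matIm A).mulVec x).re| ≤ Real.tan θ * (star x ⬝ᵥ (matRe A).mulVec x).re

/-- The `v`-weighted arithmetic mean `A ∇_v B = v A + (1 - v) B`. -/
noncomputable def amean {n : ℕ} (v : ℝ) (A B : Matrix (Fin n) (Fin n) ℂ) :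
    Matrix (Fin n) (Fin n) ℂ :=
  (v : ℂ) • A + ((1 - v : ℝ) : ℂ) • B

/-- The `v`-weighted harmonic mean `A !_v B = (v A⁻¹ + (1 - v) B⁻¹)⁻¹`. -/
noncomputable def hmean {n : ℕ} (v : ℝ) (A B : Matrix (Fin n) (Fin n) ℂ) :
    Matrix (Fin n) (Fin n) ℂ :=
  ((v : ℂ) • A⁻¹ + ((1 - v : ℝ) : ℂ) • B⁻¹)⁻¹

/-- A linear map on matrices is positive and unital. -/
def IsPosUnitalMap {n : ℕ}
    (Φ : Matrix (Fin n) (Fin n) ℂ →ₗ[ℂ] Matrix (Fin n) (Fin n) ℂ) : Prop :=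
  Φ 1 = 1 ∧ ∀ X : Matrix (Fin n) (Fin n) ℂ, X.PosSemidef → (Φ X).PosSemidef

/-- The numerical radius `ω(A) = sup { |⟨Ax, x⟩| : ‖x‖ = 1 }` (ℓ² norm). -/
noncomputable def numRadius {n : ℕ} (A : Matrix (Fin n) (Fin n) ℂ) : ℝ :=
  sSup {r : ℝ | ∃ x : EuclideanSpace ℂ (Fin n), ‖x‖ = 1 ∧
    r = ‖star (x : Fin n → ℂ) ⬝ᵥ A.mulVec (x : Fin n → ℂ)‖}

/-- The spectral norm (ℓ² → ℓ² operator norm) of a matrix. -/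
noncomputable def matSpectralNorm {n : ℕ} (A : Matrix (Fin n) (Fin n) ℂ) : ℝ :=
  ‖Matrix.toEuclideanCLM (𝕜 := ℂ) A‖

section
open scoped MatrixOrder

noncomputable def Matrix.PosSemidef.sqrt {n : ℕ} {A : Matrix (Fin n) (Fin n) ℂ}
    (_ : A.PosSemidef) : Matrix (Fin n) (Fin n) ℂ := CFC.sqrt A

lemma Matrix.PosSemidef.posSemidef_sqrt {n : ℕ} {A : Matrix (Fin n) (Fin n) ℂ}
    (hA : A.PosSemidef) : hA.sqrt.PosSemidef := (CFC.sqrt_nonneg A).posSemidef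

lemma Matrix.PosSemidef.sqrt_mul_self {n : ℕ} {A : Matrix (Fin n) (Fin n) ℂ}
    (hA : A.PosSemidef) : hA.sqrt * hA.sqrt = A := CFC.sqrt_mul_sqrt_self A hA.nonneg

end

namespace SP

variable {n : ℕ}

noncomputable def ee (x : Fin n → ℂ) : EuclideanSpace ℂ (Fin n) := (WithLp.equiv 2 _).symm x

noncomputable def No (x : Fin n → ℂ) : ℝ := ‖ee x‖

lemma inner_ee (x y : Fin n → ℂ) : (inner ℂ (ee x) (ee y) : ℂ) = star x ⬝ᵥ y :=
  (EuclideanSpace.inner_toLp_toLp x y).trans (dotProduct_comm _ _)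

lemma No_nonneg (x : Fin n → ℂ) : 0 ≤ No x := norm_nonneg _

lemma No_sq (x : Fin n → ℂ) : No x ^ 2 = (star x ⬝ᵥ x).re := by
  have h := inner_ee x x
  have h2 : ‖ee x‖ ^ 2 = Complex.re (inner ℂ (ee x) (ee x)) :=
    (inner_self_eq_norm_sq (𝕜 := ℂ) (ee x)).symm
  rw [No, h2, h]

lemma abs_dot_le (x y : Fin n → ℂ) : ‖star x ⬝ᵥ y‖ ≤ No x * No y := by
  have := norm_inner_le_norm (𝕜 := ℂ) (ee x) (ee y)
  rwa [inner_ee] at this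

lemma ee_add (x y : Fin n → ℂ) : ee (x + y) = ee x + ee y := rfl
lemma ee_zero : ee (0 : Fin n → ℂ) = 0 := rfl

lemma No_zero_iff (x : Fin n → ℂ) : No x = 0 ↔ x = 0 := by
  constructor
  · intro h
    have : ee x = 0 := norm_eq_zero.mp h
    have := congrArg (WithLp.equiv 2 (Fin n → ℂ)) this
    simpa [ee] using this
  · intro h; subst h; simp [No, ee_zero]

lemma clm_apply (T : Matrix (Fin n) (Fin n) ℂ) (x : Fin n → ℂ) :
    (Matrix.toEuclideanCLM (𝕜 := ℂ) T) (ee x) = ee (T *ᵥ x) := by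
  rfl

end SP

namespace SP

lemma No_mulVec_le (T : Matrix (Fin n) (Fin n) ℂ) (x : Fin n → ℂ) :
    No (T *ᵥ x) ≤ matSpectralNorm T * No x := by
  have := (Matrix.toEuclideanCLM (𝕜 := ℂ) T).le_opNorm (ee x)
  rwa [clm_apply] at this

lemma spectralNorm_le_of (T : Matrix (Fin n) (Fin n) ℂ) {c : ℝ} (hc : 0 ≤ c)
    (h : ∀ x, No (T *ᵥ x) ≤ c * No x) : matSpectralNorm T ≤ c := by
  apply ContinuousLinearMap.opNorm_le_bound _ hc
  intro y
  have hy : y = ee (WithLp.equiv 2 _ y) := by simp [ee]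
  rw [hy, clm_apply]
  exact h _

lemma spectralNorm_nonneg (T : Matrix (Fin n) (Fin n) ℂ) : 0 ≤ matSpectralNorm T := norm_nonneg _

lemma dot_shift (T : Matrix (Fin n) (Fin n) ℂ) (x y : Fin n → ℂ) :
    star x ⬝ᵥ (T *ᵥ y) = star (Tᴴ *ᵥ x) ⬝ᵥ y := by
  rw [star_mulVec, conjTranspose_conjTranspose, dotProduct_mulVec]

lemma herm_dot_conj {H : Matrix (Fin n) (Fin n) ℂ} (hH : H.IsHermitian) (x y : Fin n → ℂ) :
    star y ⬝ᵥ (H *ᵥ x) = star (star x ⬝ᵥ (H *ᵥ y)) := by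
  rw [dot_shift H y x, hH.eq, star_dotProduct]

lemma herm_dot_real {H : Matrix (Fin n) (Fin n) ℂ} (hH : H.IsHermitian) (x : Fin n → ℂ) :
    star x ⬝ᵥ (H *ᵥ x) = ((star x ⬝ᵥ (H *ᵥ x)).re : ℂ) := by
  have h := herm_dot_conj hH x x
  have h' : (starRingEnd ℂ) (star x ⬝ᵥ H *ᵥ x) = star x ⬝ᵥ H *ᵥ x := h.symm
  exact (Complex.conj_eq_iff_re.mp h').symm

end SP

lemma sq_le_imp {a b : ℝ} (hb : 0 ≤ b) (h : a ^ 2 ≤ b ^ 2) (ha : 0 ≤ a) : a ≤ b := by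
  nlinarith

lemma le_of_le_sqrt_mul {a b : ℝ} (ha : 0 ≤ a) (hb : 0 ≤ b)
    (h : a ≤ Real.sqrt a * Real.sqrt b) : a ≤ b := by
  rcases eq_or_lt_of_le ha with h0 | h0
  · linarith
  · have h1 : a * a ≤ (Real.sqrt a * Real.sqrt b) * (Real.sqrt a * Real.sqrt b) := by
      nlinarith [Real.sqrt_nonneg a, Real.sqrt_nonneg b]
    rw [mul_mul_mul_comm, Real.mul_self_sqrt ha, Real.mul_self_sqrt hb] at h1
    exact le_of_mul_le_mul_left (by linarith) h0

namespace SP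

variable {n : ℕ}

lemma cs_re (x y : Fin n → ℂ) : (star x ⬝ᵥ y).re ≤ No x * No y :=
  le_trans (Complex.re_le_norm _) (abs_dot_le x y)

lemma form_le_norm (T : Matrix (Fin n) (Fin n) ℂ) (x : Fin n → ℂ) :
    (star x ⬝ᵥ T *ᵥ x).re ≤ matSpectralNorm T * No x ^ 2 := by
  have h1 := cs_re x (T *ᵥ x)
  have h2 := No_mulVec_le T x
  have h3 := No_nonneg x
  nlinarith

lemma norm_sq_of_herm_sq {G E : Matrix (Fin n) (Fin n) ℂ} (hG : G.IsHermitian)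
    (hGG : G * G = E) (x : Fin n → ℂ) :
    No (G *ᵥ x) ^ 2 = (star x ⬝ᵥ E *ᵥ x).re := by
  rw [No_sq]
  congr 1
  rw [← hGG, ← mulVec_mulVec, dot_shift G x (G *ᵥ x), hG.eq]

lemma posDef_of_re {H : Matrix (Fin n) (Fin n) ℂ} (hH : H.IsHermitian)
    (h : ∀ x, x ≠ 0 → 0 < (star x ⬝ᵥ H *ᵥ x).re) : H.PosDef := by
  refine Matrix.PosDef.of_dotProduct_mulVec_pos hH fun x hx => ?_
  rw [herm_dot_real hH x]
  exact_mod_cast h x hx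

/-- Data of a square root pair for a positive definite matrix. -/
structure SqrtPair (P : Matrix (Fin n) (Fin n) ℂ) where
  G : Matrix (Fin n) (Fin n) ℂ
  Gi : Matrix (Fin n) (Fin n) ℂ
  hG : G.IsHermitian
  hGi : Gi.IsHermitian
  mul : G * G = P
  muli : Gi * Gi = P⁻¹
  GGi : G * Gi = 1
  GiG : Gi * G = 1

noncomputable def sqrtPair {P : Matrix (Fin n) (Fin n) ℂ} (hP : P.PosDef) : SqrtPair P := by
  have hpsd : P.PosSemidef := hP.posSemidef
  refine ⟨hpsd.sqrt, hpsd.sqrt⁻¹, hpsd.posSemidef_sqrt.1, ?_, hpsd.sqrt_mul_self, ?_, ?_, ?_⟩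
  case _ =>
    exact hpsd.posSemidef_sqrt.1.inv
  case _ =>
    have h' : P⁻¹ = (hpsd.sqrt * hpsd.sqrt)⁻¹ := by rw [hpsd.sqrt_mul_self]
    rw [h', Matrix.mul_inv_rev]
  case _ =>
    apply mul_nonsing_inv
    have hdet : hpsd.sqrt.det * hpsd.sqrt.det = P.det := by
      rw [← det_mul, hpsd.sqrt_mul_self]
    have : hpsd.sqrt.det ≠ 0 := fun h0 => by
      rw [h0, mul_zero] at hdet
      exact hP.det_pos.ne hdet
    exact isUnit_iff_ne_zero.mpr this
  case _ =>
    apply nonsing_inv_mul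
    have hdet : hpsd.sqrt.det * hpsd.sqrt.det = P.det := by
      rw [← det_mul, hpsd.sqrt_mul_self]
    have : hpsd.sqrt.det ≠ 0 := fun h0 => by
      rw [h0, mul_zero] at hdet
      exact hP.det_pos.ne hdet
    exact isUnit_iff_ne_zero.mpr this

lemma SqrtPair.formG {P : Matrix (Fin n) (Fin n) ℂ} (sp : SqrtPair P) (x : Fin n → ℂ) :
    No (sp.G *ᵥ x) ^ 2 = (star x ⬝ᵥ P *ᵥ x).re :=
  norm_sq_of_herm_sq sp.hG sp.mul x

lemma SqrtPair.formGi {P : Matrix (Fin n) (Fin n) ℂ} (sp : SqrtPair P) (x : Fin n → ℂ) :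
    No (sp.Gi *ᵥ x) ^ 2 = (star x ⬝ᵥ P⁻¹ *ᵥ x).re :=
  norm_sq_of_herm_sq sp.hGi sp.muli x

lemma psd_norm_le {E : Matrix (Fin n) (Fin n) ℂ} (hE : E.PosSemidef) {c : ℝ} (hc : 0 ≤ c)
    (h : ∀ x, (star x ⬝ᵥ E *ᵥ x).re ≤ c * No x ^ 2) : matSpectralNorm E ≤ c := by
  apply spectralNorm_le_of _ hc
  intro x
  have key : No (E *ᵥ x) ^ 2 ≤ (c * No x) ^ 2 := by
    have h1 : E *ᵥ x = hE.sqrt *ᵥ (hE.sqrt *ᵥ x) := by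
      rw [mulVec_mulVec, hE.sqrt_mul_self]
    have h2 : No (E *ᵥ x) ^ 2 = (star (hE.sqrt *ᵥ x) ⬝ᵥ E *ᵥ (hE.sqrt *ᵥ x)).re := by
      rw [h1]; exact norm_sq_of_herm_sq hE.posSemidef_sqrt.1 hE.sqrt_mul_self _
    have h3 := h (hE.sqrt *ᵥ x)
    have h4 : No (hE.sqrt *ᵥ x) ^ 2 = (star x ⬝ᵥ E *ᵥ x).re :=
      norm_sq_of_herm_sq hE.posSemidef_sqrt.1 hE.sqrt_mul_self x
    have h5 := h x
    have h6 := No_nonneg x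
    nlinarith
  exact sq_le_imp (mul_nonneg hc (No_nonneg x)) key (No_nonneg _)

lemma SqrtPair.GiP {P : Matrix (Fin n) (Fin n) ℂ} (sp : SqrtPair P) : sp.Gi * P = sp.G := by
  have h : sp.Gi * (sp.G * sp.G) = sp.G := by rw [← mul_assoc, sp.GiG, one_mul]
  rw [sp.mul] at h
  exact h

lemma SqrtPair.PGi {P : Matrix (Fin n) (Fin n) ℂ} (sp : SqrtPair P) : P * sp.Gi = sp.G := by
  have h : (sp.G * sp.G) * sp.Gi = sp.G := by rw [mul_assoc, sp.GGi, mul_one]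
  rw [sp.mul] at h
  exact h

lemma SqrtPair.inner_one {P : Matrix (Fin n) (Fin n) ℂ} (sp : SqrtPair P) :
    sp.Gi * P * sp.Gi = 1 := by
  rw [sp.GiP, sp.GGi]

lemma SqrtPair.inner_sq {P : Matrix (Fin n) (Fin n) ℂ} (sp : SqrtPair P) :
    sp.Gi * (P * P) * sp.Gi = P := by
  have h1 : sp.Gi * (P * P) * sp.Gi = (sp.Gi * P) * (P * sp.Gi) := by
    rw [mul_assoc, mul_assoc, mul_assoc]
  rw [h1, sp.GiP, sp.PGi, sp.mul]

lemma SqrtPair.GimulP {P : Matrix (Fin n) (Fin n) ℂ} (sp : SqrtPair P) (z : Fin n → ℂ) :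
    sp.Gi *ᵥ (P *ᵥ z) = sp.G *ᵥ z := by
  rw [mulVec_mulVec, sp.GiP]

end SP

namespace SP

variable {n : ℕ}

lemma matRe_isHermitian (T : Matrix (Fin n) (Fin n) ℂ) : (matRe T).IsHermitian := by
  unfold Matrix.IsHermitian matRe
  rw [conjTranspose_smul, conjTranspose_add, conjTranspose_conjTranspose]
  rw [show star (2⁻¹ : ℂ) = (2⁻¹ : ℂ) by norm_num [Complex.ext_iff]]
  rw [add_comm Tᴴ T]

lemma matIm_isHermitian (T : Matrix (Fin n) (Fin n) ℂ) : (matIm T).IsHermitian := by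
  unfold Matrix.IsHermitian matIm
  rw [conjTranspose_smul, conjTranspose_sub, conjTranspose_conjTranspose]
  have h1 : star ((2 * Complex.I)⁻¹ : ℂ) = -(2 * Complex.I)⁻¹ := by
    rw [star_inv₀, star_mul', Complex.star_def, Complex.conj_I]
    rw [show (starRingEnd ℂ) 2 = 2 by norm_num [Complex.ext_iff]]
    rw [show (2:ℂ) * -Complex.I = -(2 * Complex.I) from by ring, inv_neg]
  rw [h1, neg_smul, ← smul_neg, neg_sub]

lemma matRe_add_I_matIm (T : Matrix (Fin n) (Fin n) ℂ) :
    matRe T + Complex.I • matIm T = T := by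
  unfold matRe matIm
  rw [smul_smul]
  have h1 : Complex.I * (2 * Complex.I)⁻¹ = (2⁻¹ : ℂ) := by
    rw [mul_inv, Complex.inv_I]
    rw [show Complex.I * (2⁻¹ * -Complex.I) = -(Complex.I * Complex.I) * 2⁻¹ from by ring,
      Complex.I_mul_I]
    norm_num
  rw [h1, ← smul_add]
  have h2 : T + Tᴴ + (T - Tᴴ) = (2 : ℂ) • T := by
    rw [two_smul]; abel
  rw [h2, smul_smul]
  norm_num

lemma matRe_combo (r s : ℝ) (X Y : Matrix (Fin n) (Fin n) ℂ) :
    matRe ((r : ℂ) • X + (s : ℂ) • Y) = (r : ℂ) • matRe X + (s : ℂ) • matRe Y := by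
  unfold matRe
  rw [conjTranspose_add, conjTranspose_smul, conjTranspose_smul]
  rw [show star (r : ℂ) = (r : ℂ) by simp, show star (s : ℂ) = (s : ℂ) by simp]
  module

lemma matIm_combo (r s : ℝ) (X Y : Matrix (Fin n) (Fin n) ℂ) :
    matIm ((r : ℂ) • X + (s : ℂ) • Y) = (r : ℂ) • matIm X + (s : ℂ) • matIm Y := by
  unfold matIm
  rw [conjTranspose_add, conjTranspose_smul, conjTranspose_smul]
  rw [show star (r : ℂ) = (r : ℂ) by simp, show star (s : ℂ) = (s : ℂ) by simp]
  have : (r : ℂ) • X + (s : ℂ) • Y - ((r : ℂ) • Xᴴ + (s : ℂ) • Yᴴ)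
      = (r : ℂ) • (X - Xᴴ) + (s : ℂ) • (Y - Yᴴ) := by
    rw [smul_sub, smul_sub]; abel
  rw [this]
  module

lemma dot_combo (r s : ℝ) (P Q : Matrix (Fin n) (Fin n) ℂ) (x : Fin n → ℂ) :
    star x ⬝ᵥ ((r : ℂ) • P + (s : ℂ) • Q) *ᵥ x
      = (r : ℂ) * (star x ⬝ᵥ P *ᵥ x) + (s : ℂ) * (star x ⬝ᵥ Q *ᵥ x) := by
  rw [add_mulVec, dotProduct_add, smul_mulVec, smul_mulVec,
    dotProduct_smul, dotProduct_smul, smul_eq_mul, smul_eq_mul]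

lemma re_ofReal_mul' (r : ℝ) (z : ℂ) : ((r : ℂ) * z).re = r * z.re := by
  simp [Complex.mul_re]

lemma dot_combo_re (r s : ℝ) (P Q : Matrix (Fin n) (Fin n) ℂ) (x : Fin n → ℂ) :
    (star x ⬝ᵥ ((r : ℂ) • P + (s : ℂ) • Q) *ᵥ x).re
      = r * (star x ⬝ᵥ P *ᵥ x).re + s * (star x ⬝ᵥ Q *ᵥ x).re := by
  rw [dot_combo, Complex.add_re, re_ofReal_mul', re_ofReal_mul']

lemma dot_combo_im (r s : ℝ) (P Q : Matrix (Fin n) (Fin n) ℂ) (x : Fin n → ℂ) :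
    (star x ⬝ᵥ ((r : ℂ) • P + (s : ℂ) • Q) *ᵥ x).im
      = r * (star x ⬝ᵥ P *ᵥ x).im + s * (star x ⬝ᵥ Q *ᵥ x).im := by
  rw [dot_combo, Complex.add_im]
  simp [Complex.mul_im]

lemma form_re (T : Matrix (Fin n) (Fin n) ℂ) (x : Fin n → ℂ) :
    (star x ⬝ᵥ T *ᵥ x).re = (star x ⬝ᵥ (matRe T) *ᵥ x).re := by
  conv_lhs => rw [← matRe_add_I_matIm T]
  rw [add_mulVec, dotProduct_add, smul_mulVec, dotProduct_smul, smul_eq_mul]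
  rw [Complex.add_re, herm_dot_real (matIm_isHermitian T) x]
  simp

lemma form_im (T : Matrix (Fin n) (Fin n) ℂ) (x : Fin n → ℂ) :
    (star x ⬝ᵥ T *ᵥ x).im = (star x ⬝ᵥ (matIm T) *ᵥ x).re := by
  conv_lhs => rw [← matRe_add_I_matIm T]
  rw [add_mulVec, dotProduct_add, smul_mulVec, dotProduct_smul, smul_eq_mul]
  rw [Complex.add_im, herm_dot_real (matRe_isHermitian T) x,
    herm_dot_real (matIm_isHermitian T) x]
  simp

lemma herm_combo (r s : ℝ) {X Y : Matrix (Fin n) (Fin n) ℂ}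
    (hX : X.IsHermitian) (hY : Y.IsHermitian) :
    ((r : ℂ) • X + (s : ℂ) • Y).IsHermitian := by
  unfold Matrix.IsHermitian
  rw [conjTranspose_add, conjTranspose_smul, conjTranspose_smul, hX.eq, hY.eq]
  rw [show star (r : ℂ) = (r : ℂ) by simp, show star (s : ℂ) = (s : ℂ) by simp]

lemma loewner_lower {C : Matrix (Fin n) (Fin n) ℂ} {m : ℝ}
    (h : (C - m • (1 : Matrix (Fin n) (Fin n) ℂ)).PosSemidef) (x : Fin n → ℂ) :
    m * No x ^ 2 ≤ (star x ⬝ᵥ C *ᵥ x).re := by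
  have h1 := h.re_dotProduct_nonneg x
  have h2 : star x ⬝ᵥ (C - m • (1 : Matrix (Fin n) (Fin n) ℂ)) *ᵥ x
      = star x ⬝ᵥ C *ᵥ x - m • (star x ⬝ᵥ x) := by
    rw [sub_mulVec, dotProduct_sub, smul_mulVec, one_mulVec, dotProduct_smul]
  rw [h2] at h1
  have h1 : (0:ℝ) ≤ (star x ⬝ᵥ C *ᵥ x - m • (star x ⬝ᵥ x)).re := h1
  have h3 : (star x ⬝ᵥ C *ᵥ x - m • (star x ⬝ᵥ x)).re
      = (star x ⬝ᵥ C *ᵥ x).re - m * (star x ⬝ᵥ x).re := by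
    rw [Complex.sub_re]
    congr 1
    rw [Complex.real_smul, re_ofReal_mul']
  rw [h3] at h1
  rw [No_sq]
  linarith [h1]

lemma loewner_upper {C : Matrix (Fin n) (Fin n) ℂ} {M : ℝ}
    (h : (M • (1 : Matrix (Fin n) (Fin n) ℂ) - C).PosSemidef) (x : Fin n → ℂ) :
    (star x ⬝ᵥ C *ᵥ x).re ≤ M * No x ^ 2 := by
  have h1 := h.re_dotProduct_nonneg x
  have h2 : star x ⬝ᵥ (M • (1 : Matrix (Fin n) (Fin n) ℂ) - C) *ᵥ x
      = M • (star x ⬝ᵥ x) - star x ⬝ᵥ C *ᵥ x := by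
    rw [sub_mulVec, dotProduct_sub, smul_mulVec, one_mulVec, dotProduct_smul]
  rw [h2] at h1
  have h1 : (0:ℝ) ≤ (M • (star x ⬝ᵥ x) - star x ⬝ᵥ C *ᵥ x).re := h1
  have h3 : (M • (star x ⬝ᵥ x) - star x ⬝ᵥ C *ᵥ x).re
      = M * (star x ⬝ᵥ x).re - (star x ⬝ᵥ C *ᵥ x).re := by
    rw [Complex.sub_re]
    congr 1
    rw [Complex.real_smul, re_ofReal_mul']
  rw [h3] at h1
  rw [No_sq]
  linarith [h1]

lemma isUnit_of_matRe_posDef {T : Matrix (Fin n) (Fin n) ℂ} (h : (matRe T).PosDef) :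
    IsUnit T := by
  rw [← Matrix.mulVec_injective_iff_isUnit]
  intro x y hxy
  by_contra hne
  have hz : x - y ≠ 0 := sub_ne_zero.mpr (fun h' => hne (by exact h'))
  have h0 : T *ᵥ (x - y) = 0 := by
    rw [mulVec_sub, hxy, sub_self]
  have hpos := h.re_dotProduct_pos hz
  have hpos : (0:ℝ) < (star (x - y) ⬝ᵥ matRe T *ᵥ (x - y)).re := hpos
  rw [← form_re T (x - y)] at hpos
  rw [h0, dotProduct_zero] at hpos
  simp at hpos

lemma mulVec_inv_cancel {T : Matrix (Fin n) (Fin n) ℂ} (hT : IsUnit T) (x : Fin n → ℂ) :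
    T *ᵥ (T⁻¹ *ᵥ x) = x := by
  rw [mulVec_mulVec, Matrix.mul_nonsing_inv _ ((Matrix.isUnit_iff_isUnit_det T).mp hT),
    one_mulVec]

lemma inv_mulVec_cancel {T : Matrix (Fin n) (Fin n) ℂ} (hT : IsUnit T) (x : Fin n → ℂ) :
    T⁻¹ *ᵥ (T *ᵥ x) = x := by
  rw [mulVec_mulVec, Matrix.nonsing_inv_mul _ ((Matrix.isUnit_iff_isUnit_det T).mp hT),
    one_mulVec]

lemma q_inv {T : Matrix (Fin n) (Fin n) ℂ} (hT : IsUnit T) (x : Fin n → ℂ) :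
    star x ⬝ᵥ T⁻¹ *ᵥ x = star (star (T⁻¹ *ᵥ x) ⬝ᵥ T *ᵥ (T⁻¹ *ᵥ x)) := by
  set u := T⁻¹ *ᵥ x with hu
  have h1 : star (star u ⬝ᵥ (T *ᵥ u)) = star (T *ᵥ u) ⬝ᵥ u := by
    rw [star_dotProduct, star_star]
  rw [h1, mulVec_inv_cancel hT]

end SP

namespace SP

variable {n : ℕ}

lemma star_I_eq : star Complex.I = -Complex.I := by simp [Complex.ext_iff]

lemma ee_smul_real (s : ℝ) (v : Fin n → ℂ) : ee (s • v) = s • ee v := rfl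

lemma No_smul_real (s : ℝ) (v : Fin n → ℂ) : No (s • v) = |s| * No v := by
  rw [No, ee_smul_real, norm_smul, Real.norm_eq_abs, No]

lemma No_add_sq (y w : Fin n → ℂ) :
    No (y + w) ^ 2 = No y ^ 2 + No w ^ 2 + 2 * (star y ⬝ᵥ w).re := by
  have hsw : star w ⬝ᵥ y = star (star y ⬝ᵥ w) := star_dotProduct w y
  have e1 : star (y + w) ⬝ᵥ (y + w)
      = (star y ⬝ᵥ y + star w ⬝ᵥ w) + ((star y ⬝ᵥ w) + star (star y ⬝ᵥ w)) := by
    rw [star_add, add_dotProduct, dotProduct_add, dotProduct_add, hsw]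
    ring
  rw [No_sq, No_sq, No_sq, e1]
  simp only [Complex.add_re, Complex.add_im]
  have : (star (star y ⬝ᵥ w)).re = (star y ⬝ᵥ w).re := by
    simp [Complex.star_def]
  rw [this]; ring

lemma No_sub_sq (y w : Fin n → ℂ) :
    No (y - w) ^ 2 = No y ^ 2 + No w ^ 2 - 2 * (star y ⬝ᵥ w).re := by
  have hsw : star w ⬝ᵥ y = star (star y ⬝ᵥ w) := star_dotProduct w y
  have e1 : star (y - w) ⬝ᵥ (y - w)
      = (star y ⬝ᵥ y + star w ⬝ᵥ w) - ((star y ⬝ᵥ w) + star (star y ⬝ᵥ w)) := by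
    rw [star_sub, sub_dotProduct, dotProduct_sub, dotProduct_sub, hsw]
    ring
  rw [No_sq, No_sq, No_sq, e1]
  simp only [Complex.sub_re, Complex.add_re]
  have : (star (star y ⬝ᵥ w)).re = (star y ⬝ᵥ w).re := by
    simp [Complex.star_def]
  rw [this]; ring

lemma norm_add_I_smul (y w : Fin n → ℂ) (hreal : (star y ⬝ᵥ w).im = 0) :
    No (y + Complex.I • w) ^ 2 = No y ^ 2 + No w ^ 2 := by
  rw [No_add_sq]
  have h1 : (star y ⬝ᵥ (Complex.I • w)).re = 0 := by
    rw [dotProduct_smul, smul_eq_mul, Complex.mul_re]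
    simp [hreal]
  have h2 : No (Complex.I • w) = No w := by
    rw [No, show ee (Complex.I • w) = Complex.I • ee w from rfl, norm_smul]
    simp [No]
  rw [h1, h2]; ring

lemma herm_norm_bound {X : Matrix (Fin n) (Fin n) ℂ} (hX : X.IsHermitian) {c : ℝ}
    (hc : 0 ≤ c) (h : ∀ w, |(star w ⬝ᵥ X *ᵥ w).re| ≤ c * No w ^ 2) (y : Fin n → ℂ) :
    No (X *ᵥ y) ≤ c * No y := by
  by_cases h0 : X *ᵥ y = 0
  · rw [h0, show No (0 : Fin n → ℂ) = 0 from (No_zero_iff 0).mpr rfl]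
    exact mul_nonneg hc (No_nonneg y)
  · have hNXy : 0 < No (X *ᵥ y) :=
      (No_nonneg _).lt_of_ne' (fun h' => h0 ((No_zero_iff _).mp h'))
    set s : ℝ := No y / No (X *ᵥ y) with hs
    have hs0 : 0 ≤ s := div_nonneg (No_nonneg y) (No_nonneg _)
    set w : Fin n → ℂ := s • (X *ᵥ y) with hw
    have hNw : No w = No y := by
      rw [hw, No_smul_real, abs_of_nonneg hs0, hs, div_mul_cancel₀ _ hNXy.ne']
    -- cross term
    have hcross : (star y ⬝ᵥ (X *ᵥ w)).re = s * No (X *ᵥ y) ^ 2 := by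
      rw [hw, mulVec_smul, dotProduct_smul]
      have h1 : star y ⬝ᵥ (X *ᵥ (X *ᵥ y)) = star (X *ᵥ y) ⬝ᵥ (X *ᵥ y) := by
        rw [dot_shift, hX.eq]
      rw [h1]
      have h2 : (star (X *ᵥ y) ⬝ᵥ (X *ᵥ y)).re = No (X *ᵥ y) ^ 2 := (No_sq _).symm
      have h3 : (s • (star (X *ᵥ y) ⬝ᵥ (X *ᵥ y))).re = s * (star (X *ᵥ y) ⬝ᵥ (X *ᵥ y)).re := by
        rw [Complex.real_smul, re_ofReal_mul']
      rw [h3, h2]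
    -- polarization identity on forms
    have hpol : (star (y + w) ⬝ᵥ X *ᵥ (y + w)).re - (star (y - w) ⬝ᵥ X *ᵥ (y - w)).re
        = 4 * (star y ⬝ᵥ (X *ᵥ w)).re := by
      have hconj : star w ⬝ᵥ (X *ᵥ y) = star (star y ⬝ᵥ (X *ᵥ w)) := herm_dot_conj hX y w
      have e1 : star (y + w) ⬝ᵥ X *ᵥ (y + w)
          = star y ⬝ᵥ X *ᵥ y + star w ⬝ᵥ X *ᵥ w
            + ((star y ⬝ᵥ (X *ᵥ w)) + star (star y ⬝ᵥ (X *ᵥ w))) := by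
        rw [star_add, mulVec_add, add_dotProduct, dotProduct_add, dotProduct_add, hconj]
        ring
      have e2 : star (y - w) ⬝ᵥ X *ᵥ (y - w)
          = star y ⬝ᵥ X *ᵥ y + star w ⬝ᵥ X *ᵥ w
            - ((star y ⬝ᵥ (X *ᵥ w)) + star (star y ⬝ᵥ (X *ᵥ w))) := by
        rw [star_sub, mulVec_sub, sub_dotProduct, dotProduct_sub, dotProduct_sub, hconj]
        ring
      rw [e1, e2]
      simp only [Complex.add_re, Complex.sub_re]
      have : (star (star y ⬝ᵥ (X *ᵥ w))).re = (star y ⬝ᵥ (X *ᵥ w)).re := by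
        simp [Complex.star_def]
      rw [this]; ring
    have hbound : 4 * (star y ⬝ᵥ (X *ᵥ w)).re ≤ 4 * c * No y ^ 2 := by
      have b1 := h (y + w)
      have b2 := h (y - w)
      have c1 := No_add_sq y w
      have c2 := No_sub_sq y w
      have := abs_le.mp b1
      have := abs_le.mp b2
      rw [hNw] at c1 c2
      nlinarith [abs_le.mp b1, abs_le.mp b2]
    rw [hcross] at hbound
    rw [hs] at hbound
    have key : 4 * (No y * No (X *ᵥ y)) ≤ 4 * c * No y ^ 2 := by
      have : No y / No (X *ᵥ y) * No (X *ᵥ y) ^ 2 = No y * No (X *ᵥ y) := by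
        field_simp
      nlinarith [hbound]
    by_cases hy0 : No y = 0
    · have : y = 0 := (No_zero_iff y).mp hy0
      rw [this, mulVec_zero] at h0
      exact absurd rfl h0
    · have hy : 0 < No y := (No_nonneg y).lt_of_ne' hy0
      nlinarith [key]

lemma core {P F : Matrix (Fin n) (Fin n) ℂ} (sp : SqrtPair P) (hF : F.IsHermitian) {t : ℝ}
    (ht : 0 ≤ t)
    (hsec : ∀ x, |(star x ⬝ᵥ F *ᵥ x).re| ≤ t * (star x ⬝ᵥ P *ᵥ x).re) (y : Fin n → ℂ) :
    No (y + Complex.I • ((sp.Gi * F * sp.Gi) *ᵥ y)) ^ 2 ≤ (1 + t ^ 2) * No y ^ 2 := by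
  set X := sp.Gi * F * sp.Gi with hXdef
  have hX : X.IsHermitian := by
    show Xᴴ = X
    rw [hXdef, conjTranspose_mul, conjTranspose_mul, sp.hGi.eq, hF.eq, mul_assoc]
  have hXform : ∀ w, star w ⬝ᵥ X *ᵥ w = star (sp.Gi *ᵥ w) ⬝ᵥ F *ᵥ (sp.Gi *ᵥ w) := by
    intro w
    rw [hXdef, ← mulVec_mulVec, ← mulVec_mulVec, dot_shift, sp.hGi.eq]
  have hXbound : ∀ w, |(star w ⬝ᵥ X *ᵥ w).re| ≤ t * No w ^ 2 := by
    intro w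
    rw [hXform w]
    refine le_trans (hsec (sp.Gi *ᵥ w)) ?_
    have h1 : (star (sp.Gi *ᵥ w) ⬝ᵥ P *ᵥ (sp.Gi *ᵥ w)).re = No (sp.G *ᵥ (sp.Gi *ᵥ w)) ^ 2 :=
      (sp.formG _).symm
    have h2 : sp.G *ᵥ (sp.Gi *ᵥ w) = w := by
      rw [mulVec_mulVec, sp.GGi, one_mulVec]
    rw [h1, h2]
  have hcross : (star y ⬝ᵥ (X *ᵥ y)).im = 0 := by
    rw [herm_dot_real hX y]
    simp
  rw [norm_add_I_smul y (X *ᵥ y) hcross]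
  have hb := herm_norm_bound hX ht hXbound y
  nlinarith [No_nonneg y, No_nonneg (X *ᵥ y)]

lemma step1 {E F : Matrix (Fin n) (Fin n) ℂ} (hE : E.PosDef) (hF : F.IsHermitian) {t : ℝ}
    (ht : 0 ≤ t)
    (hsec : ∀ x, |(star x ⬝ᵥ F *ᵥ x).re| ≤ t * (star x ⬝ᵥ E *ᵥ x).re) :
    matSpectralNorm (E + Complex.I • F) ≤ Real.sqrt (1 + t ^ 2) * matSpectralNorm E := by
  have sp := sqrtPair hE
  apply spectralNorm_le_of _
    (mul_nonneg (Real.sqrt_nonneg _) (spectralNorm_nonneg _))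
  intro x
  set y := sp.G *ᵥ x with hy
  set X := sp.Gi * F * sp.Gi with hXdef
  set z := y + Complex.I • (X *ᵥ y) with hz
  have hXy : X *ᵥ y = sp.Gi *ᵥ (F *ᵥ x) := by
    rw [hy, hXdef, mulVec_mulVec, mul_assoc (sp.Gi * F) sp.Gi sp.G, sp.GiG, mul_one,
      ← mulVec_mulVec]
  have hGz : sp.G *ᵥ z = (E + Complex.I • F) *ᵥ x := by
    have a1 : sp.G *ᵥ (sp.Gi *ᵥ (F *ᵥ x)) = F *ᵥ x := by
      rw [mulVec_mulVec, sp.GGi, one_mulVec]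
    have a2 : sp.G *ᵥ y = E *ᵥ x := by rw [hy, mulVec_mulVec, sp.mul]
    rw [hz, mulVec_add, mulVec_smul, hXy, a1, a2, add_mulVec, smul_mulVec]
  have h1 : No (sp.G *ᵥ z) ^ 2 = (star z ⬝ᵥ E *ᵥ z).re := sp.formG z
  have h2 : (star z ⬝ᵥ E *ᵥ z).re ≤ matSpectralNorm E * No z ^ 2 := form_le_norm E z
  have h3 : No z ^ 2 ≤ (1 + t ^ 2) * No y ^ 2 := core sp hF ht hsec y
  have h4 : No y ^ 2 = (star x ⬝ᵥ E *ᵥ x).re := sp.formG x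
  have h5 : (star x ⬝ᵥ E *ᵥ x).re ≤ matSpectralNorm E * No x ^ 2 := form_le_norm E x
  have hkey : No ((E + Complex.I • F) *ᵥ x) ^ 2
      ≤ (Real.sqrt (1 + t ^ 2) * matSpectralNorm E * No x) ^ 2 := by
    rw [← hGz]
    have hsq : Real.sqrt (1 + t ^ 2) ^ 2 = 1 + t ^ 2 :=
      Real.sq_sqrt (by positivity)
    have hEn := spectralNorm_nonneg E
    have c1 : No (sp.G *ᵥ z) ^ 2 ≤ matSpectralNorm E * ((1 + t ^ 2) * No y ^ 2) := by
      rw [h1]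
      exact le_trans h2 (mul_le_mul_of_nonneg_left h3 hEn)
    have c2 : matSpectralNorm E * ((1 + t ^ 2) * No y ^ 2)
        ≤ matSpectralNorm E * ((1 + t ^ 2) * (matSpectralNorm E * No x ^ 2)) := by
      apply mul_le_mul_of_nonneg_left _ hEn
      apply mul_le_mul_of_nonneg_left _ (by positivity)
      rw [h4]; exact h5
    have expand : (Real.sqrt (1 + t ^ 2) * matSpectralNorm E * No x) ^ 2
        = matSpectralNorm E * ((1 + t ^ 2) * (matSpectralNorm E * No x ^ 2)) := by
      rw [mul_pow, mul_pow, hsq]; ring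
    rw [expand]
    exact le_trans c1 c2
  exact sq_le_imp
    (mul_nonneg (mul_nonneg (Real.sqrt_nonneg _) (spectralNorm_nonneg _)) (No_nonneg _))
    hkey (No_nonneg _)

end SP

namespace SP

variable {n : ℕ}

lemma conj_form {H : Matrix (Fin n) (Fin n) ℂ} (hH : H.IsHermitian)
    (T : Matrix (Fin n) (Fin n) ℂ) (x : Fin n → ℂ) :
    star (H *ᵥ x) ⬝ᵥ T *ᵥ (H *ᵥ x) = star x ⬝ᵥ (H * T * H) *ᵥ x := by
  have h1 : star x ⬝ᵥ (H *ᵥ (T *ᵥ (H *ᵥ x))) = star (H *ᵥ x) ⬝ᵥ (T *ᵥ (H *ᵥ x)) := by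
    rw [dot_shift, hH.eq]
  rw [← h1, mulVec_mulVec, mulVec_mulVec]

lemma T3 {C : Matrix (Fin n) (Fin n) ℂ} (hC : C.PosDef) {m M : ℝ}
    (hm : (C - m • (1 : Matrix (Fin n) (Fin n) ℂ)).PosSemidef)
    (hM : (M • (1 : Matrix (Fin n) (Fin n) ℂ) - C).PosSemidef) (x : Fin n → ℂ) :
    (star x ⬝ᵥ C *ᵥ x).re + m * M * (star x ⬝ᵥ C⁻¹ *ᵥ x).re ≤ (M + m) * No x ^ 2 := by
  have sp := sqrtPair hC
  set P := M • (1 : Matrix (Fin n) (Fin n) ℂ) - C with hPdef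
  set Qm := C - m • (1 : Matrix (Fin n) (Fin n) ℂ) with hQdef
  set R := hM.sqrt with hRdef
  have hR : R.IsHermitian := hM.posSemidef_sqrt.1
  have hRR : R * R = P := hM.sqrt_mul_self
  have hPQ : P + Qm = (M - m) • (1 : Matrix (Fin n) (Fin n) ℂ) := by
    rw [hPdef, hQdef, sub_smul]; abel
  have hcomm : R * Qm = Qm * R := by
    have h1 : Qm = (M - m) • (1 : Matrix (Fin n) (Fin n) ℂ) - P := by rw [← hPQ]; abel
    rw [h1, mul_sub, sub_mul]
    congr 1
    · rw [Matrix.mul_smul, Matrix.smul_mul, mul_one, one_mul]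
    · rw [← hRR, mul_assoc]
  have hform : ∀ z, 0 ≤ (star z ⬝ᵥ (P * Qm) *ᵥ z).re := by
    intro z
    have h1 : P * Qm = R * (Qm * R) := by rw [← hRR, mul_assoc, hcomm]
    rw [h1, ← mulVec_mulVec, dot_shift, hR.eq, ← mulVec_mulVec]
    have := hm.re_dotProduct_nonneg (R *ᵥ z)
    rw [hQdef]
    exact this
  have hexp : P * Qm = M • C + m • C - (m * M) • (1 : Matrix (Fin n) (Fin n) ℂ) - C * C := by
    rw [hPdef, hQdef]
    simp only [sub_mul, mul_sub, Matrix.smul_mul, Matrix.mul_smul, one_mul, mul_one,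
      smul_smul]
    abel
  have key := hform (sp.Gi *ᵥ x)
  rw [hexp] at key
  set z := sp.Gi *ᵥ x with hzdef
  have expand : star z ⬝ᵥ (M • C + m • C - (m * M) • (1 : Matrix (Fin n) (Fin n) ℂ) - C * C) *ᵥ z
      = M • (star z ⬝ᵥ C *ᵥ z) + m • (star z ⬝ᵥ C *ᵥ z) - (m * M) • (star z ⬝ᵥ z)
        - star z ⬝ᵥ (C * C) *ᵥ z := by
    rw [sub_mulVec, sub_mulVec, add_mulVec, smul_mulVec, smul_mulVec,
      smul_mulVec, one_mulVec, dotProduct_sub, dotProduct_sub, dotProduct_add,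
      dotProduct_smul, dotProduct_smul, dotProduct_smul]
  rw [expand] at key
  -- identities
  have eGiC : sp.Gi * C * sp.Gi = 1 := sp.inner_one
  have eGiCC : sp.Gi * (C * C) * sp.Gi = C := sp.inner_sq
  have eC : star z ⬝ᵥ C *ᵥ z = star x ⬝ᵥ x := by
    rw [hzdef, conj_form sp.hGi C x, eGiC, one_mulVec]
  have eCC : star z ⬝ᵥ (C * C) *ᵥ z = star x ⬝ᵥ C *ᵥ x := by
    rw [hzdef, conj_form sp.hGi (C * C) x, eGiCC]
  have ezz : (star z ⬝ᵥ z).re = (star x ⬝ᵥ C⁻¹ *ᵥ x).re := by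
    rw [← No_sq, hzdef, sp.formGi]
  have hre : (M • (star z ⬝ᵥ C *ᵥ z) + m • (star z ⬝ᵥ C *ᵥ z) - (m * M) • (star z ⬝ᵥ z)
      - star z ⬝ᵥ (C * C) *ᵥ z).re
      = M * (star x ⬝ᵥ x).re + m * (star x ⬝ᵥ x).re - m * M * (star x ⬝ᵥ C⁻¹ *ᵥ x).re
        - (star x ⬝ᵥ C *ᵥ x).re := by
    rw [Complex.sub_re, Complex.sub_re, Complex.add_re]
    rw [Complex.real_smul, Complex.real_smul, Complex.real_smul,
      re_ofReal_mul', re_ofReal_mul', re_ofReal_mul']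
    rw [eC, eCC, ezz]
  rw [hre] at key
  rw [No_sq]
  linarith

lemma inv_form_re {T : Matrix (Fin n) (Fin n) ℂ} (hT : IsUnit T) (x : Fin n → ℂ) :
    (star x ⬝ᵥ T⁻¹ *ᵥ x).re = (star (T⁻¹ *ᵥ x) ⬝ᵥ (matRe T) *ᵥ (T⁻¹ *ᵥ x)).re := by
  rw [q_inv hT x]
  have : (star (star (T⁻¹ *ᵥ x) ⬝ᵥ T *ᵥ (T⁻¹ *ᵥ x))).re
      = (star (T⁻¹ *ᵥ x) ⬝ᵥ T *ᵥ (T⁻¹ *ᵥ x)).re := by simp [Complex.star_def]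
  rw [this, form_re]

lemma inv_form_im {T : Matrix (Fin n) (Fin n) ℂ} (hT : IsUnit T) (x : Fin n → ℂ) :
    (star x ⬝ᵥ T⁻¹ *ᵥ x).im = -(star (T⁻¹ *ᵥ x) ⬝ᵥ (matIm T) *ᵥ (T⁻¹ *ᵥ x)).re := by
  rw [q_inv hT x]
  have : (star (star (T⁻¹ *ᵥ x) ⬝ᵥ T *ᵥ (T⁻¹ *ᵥ x))).im
      = -(star (T⁻¹ *ᵥ x) ⬝ᵥ T *ᵥ (T⁻¹ *ᵥ x)).im := by simp [Complex.star_def]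
  rw [this, form_im]

lemma inv_form_le {T : Matrix (Fin n) (Fin n) ℂ} (hRe : (matRe T).PosDef) (x : Fin n → ℂ) :
    (star x ⬝ᵥ T⁻¹ *ᵥ x).re ≤ (star x ⬝ᵥ (matRe T)⁻¹ *ᵥ x).re := by
  have hT : IsUnit T := isUnit_of_matRe_posDef hRe
  have sp := sqrtPair hRe
  set u := T⁻¹ *ᵥ x with hu
  have ha : (star x ⬝ᵥ T⁻¹ *ᵥ x).re = (star u ⬝ᵥ (matRe T) *ᵥ u).re := inv_form_re hT x
  have hnn : 0 ≤ (star u ⬝ᵥ (matRe T) *ᵥ u).re := by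
    rw [← sp.formG u]; positivity
  have hnn2 : 0 ≤ (star x ⬝ᵥ (matRe T)⁻¹ *ᵥ x).re := by
    rw [← sp.formGi x]; positivity
  -- a = re ⟨G u, Gi x⟩
  have hkey : star (sp.G *ᵥ u) ⬝ᵥ (sp.Gi *ᵥ x) = star u ⬝ᵥ x := by
    have h1 : star u ⬝ᵥ (sp.G *ᵥ (sp.Gi *ᵥ x)) = star (sp.G *ᵥ u) ⬝ᵥ (sp.Gi *ᵥ x) := by
      rw [dot_shift, sp.hG.eq]
    rw [← h1, mulVec_mulVec, sp.GGi, one_mulVec]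
  have hux : (star u ⬝ᵥ x).re = (star u ⬝ᵥ (matRe T) *ᵥ u).re := by
    conv_lhs => rw [show x = T *ᵥ u from (mulVec_inv_cancel hT x).symm]
    rw [form_re]
  have hcs : (star u ⬝ᵥ (matRe T) *ᵥ u).re ≤ No (sp.G *ᵥ u) * No (sp.Gi *ᵥ x) := by
    rw [← hux, ← hkey]
    exact cs_re _ _
  have hsq1 : No (sp.G *ᵥ u) = Real.sqrt ((star u ⬝ᵥ (matRe T) *ᵥ u).re) := by
    rw [← sp.formG u, Real.sqrt_sq (No_nonneg _)]
  have hsq2 : No (sp.Gi *ᵥ x) = Real.sqrt ((star x ⬝ᵥ (matRe T)⁻¹ *ᵥ x).re) := by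
    rw [← sp.formGi x, Real.sqrt_sq (No_nonneg _)]
  rw [ha]
  apply le_of_le_sqrt_mul hnn hnn2
  rw [← hsq1, ← hsq2]
  exact hcs

lemma inv_anti {P Q : Matrix (Fin n) (Fin n) ℂ} (hP : P.PosDef) (hQ : Q.PosDef)
    (hle : ∀ x, (star x ⬝ᵥ P *ᵥ x).re ≤ (star x ⬝ᵥ Q *ᵥ x).re) (x : Fin n → ℂ) :
    (star x ⬝ᵥ Q⁻¹ *ᵥ x).re ≤ (star x ⬝ᵥ P⁻¹ *ᵥ x).re := by
  have spP := sqrtPair hP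
  have spQ := sqrtPair hQ
  have hQu : IsUnit Q := hQ.isUnit
  set u := Q⁻¹ *ᵥ x with hu
  have hstar : ∀ z : ℂ, (star z).re = z.re := fun z => by simp [Complex.star_def]
  have ha : (star x ⬝ᵥ Q⁻¹ *ᵥ x).re = (star u ⬝ᵥ Q *ᵥ u).re := by
    rw [q_inv hQu x, hstar, ← hu]
  have hnnQ : 0 ≤ (star u ⬝ᵥ Q *ᵥ u).re := by rw [← spQ.formG u]; positivity
  have hnnP : 0 ≤ (star x ⬝ᵥ P⁻¹ *ᵥ x).re := by rw [← spP.formGi x]; positivity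
  have hkey : star (spP.G *ᵥ u) ⬝ᵥ (spP.Gi *ᵥ x) = star u ⬝ᵥ x := by
    have h1 : star u ⬝ᵥ (spP.G *ᵥ (spP.Gi *ᵥ x)) = star (spP.G *ᵥ u) ⬝ᵥ (spP.Gi *ᵥ x) := by
      rw [dot_shift, spP.hG.eq]
    rw [← h1, mulVec_mulVec, spP.GGi, one_mulVec]
  have hux : (star u ⬝ᵥ x).re = (star u ⬝ᵥ Q *ᵥ u).re := by
    conv_lhs => rw [show x = Q *ᵥ u from (mulVec_inv_cancel hQu x).symm]
  have hcs : (star u ⬝ᵥ Q *ᵥ u).re ≤ No (spP.G *ᵥ u) * No (spP.Gi *ᵥ x) := by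
    rw [← hux, ← hkey]
    exact cs_re _ _
  have hsq1 : No (spP.G *ᵥ u) = Real.sqrt ((star u ⬝ᵥ P *ᵥ u).re) := by
    rw [← spP.formG u, Real.sqrt_sq (No_nonneg _)]
  have hsq2 : No (spP.Gi *ᵥ x) = Real.sqrt ((star x ⬝ᵥ P⁻¹ *ᵥ x).re) := by
    rw [← spP.formGi x, Real.sqrt_sq (No_nonneg _)]
  rw [ha]
  apply le_of_le_sqrt_mul hnnQ hnnP
  calc (star u ⬝ᵥ Q *ᵥ u).re ≤ No (spP.G *ᵥ u) * No (spP.Gi *ᵥ x) := hcs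
    _ = Real.sqrt ((star u ⬝ᵥ P *ᵥ u).re) * Real.sqrt ((star x ⬝ᵥ P⁻¹ *ᵥ x).re) := by
        rw [hsq1, hsq2]
    _ ≤ Real.sqrt ((star u ⬝ᵥ Q *ᵥ u).re) * Real.sqrt ((star x ⬝ᵥ P⁻¹ *ᵥ x).re) := by
        apply mul_le_mul_of_nonneg_right (Real.sqrt_le_sqrt (hle u)) (Real.sqrt_nonneg _)

lemma sec_inv_form {W : Matrix (Fin n) (Fin n) ℂ} (hE' : (matRe W).PosDef) {t : ℝ}
    (ht : 0 ≤ t)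
    (hsec : ∀ x, |(star x ⬝ᵥ (matIm W) *ᵥ x).re| ≤ t * (star x ⬝ᵥ (matRe W) *ᵥ x).re)
    (hW : IsUnit W) (x : Fin n → ℂ) :
    (star x ⬝ᵥ (matRe W)⁻¹ *ᵥ x).re ≤ (1 + t ^ 2) * (star x ⬝ᵥ W⁻¹ *ᵥ x).re := by
  have sp := sqrtPair hE'
  set z := W⁻¹ *ᵥ x with hz
  set y := sp.G *ᵥ z with hy
  set X := sp.Gi * (matIm W) * sp.Gi with hX
  have hxid : sp.Gi *ᵥ x = y + Complex.I • (X *ᵥ y) := by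
    have hWz : W *ᵥ z = x := mulVec_inv_cancel hW x
    have e1 : sp.Gi *ᵥ ((matRe W) *ᵥ z) = y := by
      rw [hy]; exact sp.GimulP z
    have e2 : sp.Gi *ᵥ ((matIm W) *ᵥ z) = X *ᵥ y := by
      rw [hy, hX, mulVec_mulVec z sp.Gi (matIm W),
        mulVec_mulVec z (sp.Gi * matIm W * sp.Gi) sp.G,
        mul_assoc (sp.Gi * matIm W) sp.Gi sp.G, sp.GiG, mul_one]
    calc sp.Gi *ᵥ x = sp.Gi *ᵥ (W *ᵥ z) := by rw [hWz]
      _ = sp.Gi *ᵥ (((matRe W) + Complex.I • (matIm W)) *ᵥ z) := by rw [matRe_add_I_matIm]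
      _ = y + Complex.I • (X *ᵥ y) := by
          rw [add_mulVec, smul_mulVec, mulVec_add, mulVec_smul, e1, e2]
  have h1 : (star x ⬝ᵥ (matRe W)⁻¹ *ᵥ x).re = No (sp.Gi *ᵥ x) ^ 2 := (sp.formGi x).symm
  rw [h1, hxid]
  refine le_trans (core sp (matIm_isHermitian W) ht hsec y) (le_of_eq ?_)
  congr 1
  have hstar : ∀ w : ℂ, (star w).re = w.re := fun w => by simp [Complex.star_def]
  have h4 : (star x ⬝ᵥ W⁻¹ *ᵥ x).re = (star z ⬝ᵥ W *ᵥ z).re := by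
    rw [q_inv hW x, hstar, ← hz]
  rw [hy, sp.formG z, h4]
  exact (form_re W z).symm

end SP

namespace SP

variable {n : ℕ}

lemma convex_pos {v p q : ℝ} (hv0 : 0 ≤ v) (hv1 : 0 ≤ 1 - v) (hp : 0 < p) (hq : 0 < q) :
    0 < v * p + (1 - v) * q := by
  rcases le_total p q with h | h
  · nlinarith
  · nlinarith

lemma step2 {C D : Matrix (Fin n) (Fin n) ℂ} (hC : C.PosDef) (hD : D.PosDef) {m M v : ℝ}
    (hm : 0 < m) (hmM : m ≤ M)
    (hmC : (C - m • (1 : Matrix (Fin n) (Fin n) ℂ)).PosSemidef)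
    (hCM : (M • (1 : Matrix (Fin n) (Fin n) ℂ) - C).PosSemidef)
    (hmD : (D - m • (1 : Matrix (Fin n) (Fin n) ℂ)).PosSemidef)
    (hDM : (M • (1 : Matrix (Fin n) (Fin n) ℂ) - D).PosSemidef)
    (hv0 : 0 ≤ v) (hv1 : v ≤ 1)
    (hY : ((v : ℂ) • C⁻¹ + ((1 - v : ℝ) : ℂ) • D⁻¹).PosDef)
    (hh : 0 < matSpectralNorm ((v : ℂ) • C⁻¹ + ((1 - v : ℝ) : ℂ) • D⁻¹)⁻¹) :
    matSpectralNorm ((v : ℂ) • C + ((1 - v : ℝ) : ℂ) • D)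
      ≤ (M + m) ^ 2 / (4 * m * M) * matSpectralNorm ((v : ℂ) • C⁻¹ + ((1 - v : ℝ) : ℂ) • D⁻¹)⁻¹ := by
  have hv1' : (0:ℝ) ≤ 1 - v := by linarith
  set Y := (v : ℂ) • C⁻¹ + ((1 - v : ℝ) : ℂ) • D⁻¹ with hYdef
  set h := matSpectralNorm Y⁻¹ with hhdef
  set K := (M + m) ^ 2 / (4 * m * M) with hK
  have hM0 : (0:ℝ) < M := lt_of_lt_of_le hm hmM
  have hK0 : (0:ℝ) ≤ K := by
    rw [hK]
    apply div_nonneg (sq_nonneg _)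
    nlinarith
  have spY := sqrtPair hY
  have hE : ((v : ℂ) • C + ((1 - v : ℝ) : ℂ) • D).PosSemidef := by
    apply (posDef_of_re (herm_combo v (1 - v) hC.1 hD.1) ?_).posSemidef
    intro x hx
    have hx1 : 0 ≤ v := hv0
    have c1 : (0:ℝ) < (star x ⬝ᵥ C *ᵥ x).re := hC.re_dotProduct_pos hx
    have c2 : (0:ℝ) < (star x ⬝ᵥ D *ᵥ x).re := hD.re_dotProduct_pos hx
    rw [dot_combo_re]
    exact convex_pos hx1 (by linarith) c1 c2
  apply psd_norm_le hE (mul_nonneg hK0 hh.le)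
  intro x
  rw [dot_combo_re]
  by_cases hx0 : x = 0
  · rw [hx0]
    simp [show No (0 : Fin n → ℂ) = 0 from (No_zero_iff 0).mpr rfl]
  · have hNx : 0 < No x := (No_nonneg x).lt_of_ne' (fun h' => hx0 ((No_zero_iff x).mp h'))
    have t3C := T3 hC hmC hCM x
    have t3D := T3 hD hmD hDM x
    set aC := (star x ⬝ᵥ C *ᵥ x).re with haC
    set aD := (star x ⬝ᵥ D *ᵥ x).re with haD
    set bC := (star x ⬝ᵥ C⁻¹ *ᵥ x).re with hbC
    set bD := (star x ⬝ᵥ D⁻¹ *ᵥ x).re with hbD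
    set s := No x ^ 2 with hs
    have hs0 : (0:ℝ) ≤ s := by rw [hs]; positivity
    have hyq : (star x ⬝ᵥ Y *ᵥ x).re = v * bC + (1 - v) * bD := by
      rw [hYdef]
      exact dot_combo_re v (1 - v) C⁻¹ D⁻¹ x
    set yq := v * bC + (1 - v) * bD with hyqdef
    have hbC0 : (0:ℝ) ≤ bC := by
      have := (hC.inv.posSemidef).re_dotProduct_nonneg x
      exact this
    have hbD0 : (0:ℝ) ≤ bD := by
      have := (hD.inv.posSemidef).re_dotProduct_nonneg x
      exact this
    have hyq0 : (0:ℝ) ≤ yq := by rw [hyqdef]; nlinarith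
    have comb : v * aC + (1 - v) * aD + m * M * yq ≤ (M + m) * s := by
      have w1 := mul_le_mul_of_nonneg_left t3C hv0
      have w2 := mul_le_mul_of_nonneg_left t3D hv1'
      rw [hyqdef]; rw [hs]
      nlinarith
    have hsyq : s ≤ h * yq := by
      have k1 : star (spY.G *ᵥ x) ⬝ᵥ (spY.Gi *ᵥ x) = star x ⬝ᵥ x := by
        have h1 : star x ⬝ᵥ (spY.G *ᵥ (spY.Gi *ᵥ x)) = star (spY.G *ᵥ x) ⬝ᵥ (spY.Gi *ᵥ x) := by
          rw [dot_shift, spY.hG.eq]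
        rw [← h1, mulVec_mulVec, spY.GGi, one_mulVec]
      have k2 : s ≤ No (spY.G *ᵥ x) * No (spY.Gi *ᵥ x) := by
        rw [hs, No_sq, ← k1]
        exact cs_re _ _
      have k3 : (No (spY.G *ᵥ x) * No (spY.Gi *ᵥ x)) ^ 2
          = yq * (star x ⬝ᵥ Y⁻¹ *ᵥ x).re := by
        rw [mul_pow, spY.formG, spY.formGi, hyq]
      have k4 : (star x ⬝ᵥ Y⁻¹ *ᵥ x).re ≤ h * s := by
        have := form_le_norm Y⁻¹ x
        rw [← hhdef, ← hs] at this
        exact this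
      have k5 : (0:ℝ) ≤ (star x ⬝ᵥ Y⁻¹ *ᵥ x).re := by
        rw [← spY.formGi x]; positivity
      have k2sq : s ^ 2 ≤ (No (spY.G *ᵥ x) * No (spY.Gi *ᵥ x)) ^ 2 :=
        pow_le_pow_left₀ hs0 k2 2
      rw [k3] at k2sq
      have k6 : s ^ 2 ≤ yq * (h * s) :=
        le_trans k2sq (mul_le_mul_of_nonneg_left k4 hyq0)
      have hspos : (0:ℝ) < s := by rw [hs]; exact pow_pos hNx 2
      have k7 : s * s ≤ (h * yq) * s := by
        have e1 : s ^ 2 = s * s := sq s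
        have e2 : yq * (h * s) = (h * yq) * s := by ring
        rw [e1, e2] at k6
        exact k6
      exact le_of_mul_le_mul_right k7 hspos
    have q1 : (M + m) * h ≤ K * h ^ 2 + m * M := by
      have h4 : (0:ℝ) < 4 * m * M := by nlinarith
      have e : K * h ^ 2 + m * M - (M + m) * h = ((M + m) * h - 2 * m * M) ^ 2 / (4 * m * M) := by
        rw [hK]
        field_simp
        ring
      have e2 : (0:ℝ) ≤ ((M + m) * h - 2 * m * M) ^ 2 / (4 * m * M) :=
        div_nonneg (sq_nonneg _) h4.le
      linarith
    have final : h * (v * aC + (1 - v) * aD) ≤ h * (K * h * s) := by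
      have w1 := mul_le_mul_of_nonneg_left comb hh.le
      have w2 := mul_le_mul_of_nonneg_right q1 hs0
      have w3 := mul_le_mul_of_nonneg_left hsyq (mul_nonneg hm.le (by linarith : (0:ℝ) ≤ M))
      linarith [w1, w2, w3]
    have := le_of_mul_le_mul_left final hh
    linarith

end SP

theorem stmt11 {n : ℕ} (θ : ℝ) (hθ0 : 0 ≤ θ) (hθ1 : θ < Real.pi / 2)
    (A B : Matrix (Fin n) (Fin n) ℂ)
    (hA : sectorClass θ A) (hB : sectorClass θ B)
    (m M : ℝ) (hm : 0 < m) (hmM : m ≤ M)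
    (hmA : loewnerLE (m • (1 : Matrix (Fin n) (Fin n) ℂ)) (matRe A))
    (hAM : loewnerLE (matRe A) (M • (1 : Matrix (Fin n) (Fin n) ℂ)))
    (hmB : loewnerLE (m • (1 : Matrix (Fin n) (Fin n) ℂ)) (matRe B))
    (hBM : loewnerLE (matRe B) (M • (1 : Matrix (Fin n) (Fin n) ℂ)))
    (v : ℝ) (hv0 : 0 ≤ v) (hv1 : v ≤ 1) :
    matSpectralNorm (amean v A B) ≤ (Real.cos θ)⁻¹ ^ 3 * ((M + m) ^ 2 / (4 * m * M)) * matSpectralNorm (hmean v A B) := by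
  classical
  obtain ⟨hCpd, hsA⟩ := hA
  obtain ⟨hDpd, hsB⟩ := hB
  set t := Real.tan θ with htdef
  have hcos : 0 < Real.cos θ :=
    Real.cos_pos_of_mem_Ioo ⟨by linarith [Real.pi_pos], hθ1⟩
  have ht : 0 ≤ t := Real.tan_nonneg_of_nonneg_of_le_pi_div_two hθ0 hθ1.le
  have hsec_eq : 1 + t ^ 2 = ((Real.cos θ)⁻¹) ^ 2 := by
    rw [inv_pow, ← Real.inv_one_add_tan_sq hcos.ne', inv_inv]
  have hsqrt : Real.sqrt (1 + t ^ 2) = (Real.cos θ)⁻¹ := by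
    rw [hsec_eq, Real.sqrt_sq (by positivity)]
  have hv1' : (0:ℝ) ≤ 1 - v := by linarith
  have hK0 : (0:ℝ) ≤ (M + m) ^ 2 / (4 * m * M) := by
    apply div_nonneg (sq_nonneg _)
    nlinarith
  rcases Nat.eq_zero_or_pos n with hn | hn
  · subst hn
    have hz : ∀ T : Matrix (Fin 0) (Fin 0) ℂ, matSpectralNorm T = 0 := by
      intro T
      refine le_antisymm (SP.spectralNorm_le_of T le_rfl (fun x => ?_)) (SP.spectralNorm_nonneg T)
      have hx : ∀ y : Fin 0 → ℂ, y = 0 := fun y => funext fun i => i.elim0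
      rw [hx (T *ᵥ x), hx x, (SP.No_zero_iff 0).mpr rfl, mul_zero]
    rw [hz, hz, mul_zero]
  · -- notation
    set C := matRe A with hC
    set D := matRe B with hD
    -- A, B invertible
    have hAu : IsUnit A := SP.isUnit_of_matRe_posDef hCpd
    have hBu : IsUnit B := SP.isUnit_of_matRe_posDef hDpd
    ----------------------------------------------------------------
    -- STEP 1 : spectral norm of the arithmetic mean
    ----------------------------------------------------------------
    have hEcpd : ((v : ℂ) • C + ((1 - v : ℝ) : ℂ) • D).PosDef := by
      apply SP.posDef_of_re (SP.herm_combo v (1 - v) hCpd.1 hDpd.1)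
      intro x hx
      have c1 : (0:ℝ) < (star x ⬝ᵥ C *ᵥ x).re := hCpd.re_dotProduct_pos hx
      have c2 : (0:ℝ) < (star x ⬝ᵥ D *ᵥ x).re := hDpd.re_dotProduct_pos hx
      rw [SP.dot_combo_re]
      exact SP.convex_pos hv0 hv1' c1 c2
    have hFcherm : ((v : ℂ) • matIm A + ((1 - v : ℝ) : ℂ) • matIm B).IsHermitian :=
      SP.herm_combo v (1 - v) (SP.matIm_isHermitian A) (SP.matIm_isHermitian B)
    have hsecEF : ∀ x, |(star x ⬝ᵥ ((v : ℂ) • matIm A + ((1 - v : ℝ) : ℂ) • matIm B) *ᵥ x).re|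
        ≤ t * (star x ⬝ᵥ ((v : ℂ) • C + ((1 - v : ℝ) : ℂ) • D) *ᵥ x).re := by
      intro x
      rw [SP.dot_combo_re, SP.dot_combo_re]
      have b1 := hsA x
      have b2 := hsB x
      have a1 : |v * (star x ⬝ᵥ matIm A *ᵥ x).re| = v * |(star x ⬝ᵥ matIm A *ᵥ x).re| := by
        rw [abs_mul, abs_of_nonneg hv0]
      have a2 : |(1 - v) * (star x ⬝ᵥ matIm B *ᵥ x).re|
          = (1 - v) * |(star x ⬝ᵥ matIm B *ᵥ x).re| := by
        rw [abs_mul, abs_of_nonneg hv1']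
      calc |v * (star x ⬝ᵥ matIm A *ᵥ x).re + (1 - v) * (star x ⬝ᵥ matIm B *ᵥ x).re|
          ≤ |v * (star x ⬝ᵥ matIm A *ᵥ x).re| + |(1 - v) * (star x ⬝ᵥ matIm B *ᵥ x).re| :=
            abs_add_le _ _
        _ ≤ t * (v * (star x ⬝ᵥ C *ᵥ x).re + (1 - v) * (star x ⬝ᵥ D *ᵥ x).re) := by
            rw [a1, a2]
            have w1 := mul_le_mul_of_nonneg_left b1 hv0
            have w2 := mul_le_mul_of_nonneg_left b2 hv1'
            nlinarith
    have hdecomp : amean v A B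
        = ((v : ℂ) • C + ((1 - v : ℝ) : ℂ) • D)
          + Complex.I • ((v : ℂ) • matIm A + ((1 - v : ℝ) : ℂ) • matIm B) := by
      rw [hC, hD, ← SP.matRe_combo, ← SP.matIm_combo]
      exact (SP.matRe_add_I_matIm _).symm
    have s1 : matSpectralNorm (amean v A B)
        ≤ Real.sqrt (1 + t ^ 2) * matSpectralNorm ((v : ℂ) • C + ((1 - v : ℝ) : ℂ) • D) := by
      rw [hdecomp]
      exact SP.step1 hEcpd hFcherm ht hsecEF
    ----------------------------------------------------------------
    -- STEP 2 : Kantorovich on the Hermitian parts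
    ----------------------------------------------------------------
    have hYpd : ((v : ℂ) • C⁻¹ + ((1 - v : ℝ) : ℂ) • D⁻¹).PosDef := by
      apply SP.posDef_of_re (SP.herm_combo v (1 - v) hCpd.inv.1 hDpd.inv.1)
      intro x hx
      have c1 : (0:ℝ) < (star x ⬝ᵥ C⁻¹ *ᵥ x).re := hCpd.inv.re_dotProduct_pos hx
      have c2 : (0:ℝ) < (star x ⬝ᵥ D⁻¹ *ᵥ x).re := hDpd.inv.re_dotProduct_pos hx
      rw [SP.dot_combo_re]
      exact SP.convex_pos hv0 hv1' c1 c2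
    set Y := (v : ℂ) • C⁻¹ + ((1 - v : ℝ) : ℂ) • D⁻¹ with hYdef
    have hYu : IsUnit Y := hYpd.isUnit
    have hh : 0 < matSpectralNorm Y⁻¹ := by
      set x₀ : Fin n → ℂ := fun _ => 1 with hx₀
      have hx₀ne : x₀ ≠ 0 := by
        intro h0
        have := congrFun h0 ⟨0, hn⟩
        simp [hx₀] at this
      have hx₀pos : 0 < SP.No x₀ :=
        (SP.No_nonneg x₀).lt_of_ne' (fun h' => hx₀ne ((SP.No_zero_iff x₀).mp h'))
      have hle : SP.No x₀ ≤ matSpectralNorm Y⁻¹ * SP.No (Y *ᵥ x₀) := by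
        have := SP.No_mulVec_le Y⁻¹ (Y *ᵥ x₀)
        rwa [SP.inv_mulVec_cancel hYu] at this
      rcases (SP.spectralNorm_nonneg Y⁻¹).lt_or_eq with hlt | heq
      · exact hlt
      · exfalso
        rw [← heq, zero_mul] at hle
        linarith
    have s2 : matSpectralNorm ((v : ℂ) • C + ((1 - v : ℝ) : ℂ) • D)
        ≤ (M + m) ^ 2 / (4 * m * M) * matSpectralNorm Y⁻¹ :=
      SP.step2 hCpd hDpd hm hmM hmA hAM hmB hBM hv0 hv1 hYpd hh
    ----------------------------------------------------------------
    -- STEP 3 : harmonic mean comparison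
    ----------------------------------------------------------------
    set W := (v : ℂ) • A⁻¹ + ((1 - v : ℝ) : ℂ) • B⁻¹ with hWdef
    -- forms of A⁻¹, B⁻¹
    have reA : ∀ x, (star x ⬝ᵥ A⁻¹ *ᵥ x).re
        = (star (A⁻¹ *ᵥ x) ⬝ᵥ C *ᵥ (A⁻¹ *ᵥ x)).re := fun x => SP.inv_form_re hAu x
    have reB : ∀ x, (star x ⬝ᵥ B⁻¹ *ᵥ x).re
        = (star (B⁻¹ *ᵥ x) ⬝ᵥ D *ᵥ (B⁻¹ *ᵥ x)).re := fun x => SP.inv_form_re hBu x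
    have reA0 : ∀ x, 0 ≤ (star x ⬝ᵥ A⁻¹ *ᵥ x).re := by
      intro x
      rw [reA x]
      have : (0:ℝ) ≤ (star (A⁻¹ *ᵥ x) ⬝ᵥ C *ᵥ (A⁻¹ *ᵥ x)).re :=
        hCpd.posSemidef.re_dotProduct_nonneg _
      exact this
    have reB0 : ∀ x, 0 ≤ (star x ⬝ᵥ B⁻¹ *ᵥ x).re := by
      intro x
      rw [reB x]
      have : (0:ℝ) ≤ (star (B⁻¹ *ᵥ x) ⬝ᵥ D *ᵥ (B⁻¹ *ᵥ x)).re :=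
        hDpd.posSemidef.re_dotProduct_nonneg _
      exact this
    have imA : ∀ x, |(star x ⬝ᵥ A⁻¹ *ᵥ x).im| ≤ t * (star x ⬝ᵥ A⁻¹ *ᵥ x).re := by
      intro x
      rw [SP.inv_form_im hAu x, abs_neg, reA x]
      exact hsA (A⁻¹ *ᵥ x)
    have imB : ∀ x, |(star x ⬝ᵥ B⁻¹ *ᵥ x).im| ≤ t * (star x ⬝ᵥ B⁻¹ *ᵥ x).re := by
      intro x
      rw [SP.inv_form_im hBu x, abs_neg, reB x]
      exact hsB (B⁻¹ *ᵥ x)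
    have leA : ∀ x, (star x ⬝ᵥ A⁻¹ *ᵥ x).re ≤ (star x ⬝ᵥ C⁻¹ *ᵥ x).re :=
      fun x => SP.inv_form_le hCpd x
    have leB : ∀ x, (star x ⬝ᵥ B⁻¹ *ᵥ x).re ≤ (star x ⬝ᵥ D⁻¹ *ᵥ x).re :=
      fun x => SP.inv_form_le hDpd x
    -- positivity of forms when x ≠ 0
    have reApos : ∀ x, x ≠ 0 → 0 < (star x ⬝ᵥ A⁻¹ *ᵥ x).re := by
      intro x hx
      rw [reA x]
      have hu : A⁻¹ *ᵥ x ≠ 0 := by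
        intro h0
        have := SP.mulVec_inv_cancel hAu x
        rw [h0, mulVec_zero] at this
        exact hx this.symm
      exact hCpd.re_dotProduct_pos hu
    have reBpos : ∀ x, x ≠ 0 → 0 < (star x ⬝ᵥ B⁻¹ *ᵥ x).re := by
      intro x hx
      rw [reB x]
      have hu : B⁻¹ *ᵥ x ≠ 0 := by
        intro h0
        have := SP.mulVec_inv_cancel hBu x
        rw [h0, mulVec_zero] at this
        exact hx this.symm
      exact hDpd.re_dotProduct_pos hu
    -- matRe W positive definite
    have hWrepd : (matRe W).PosDef := by
      apply SP.posDef_of_re (SP.matRe_isHermitian W)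
      intro x hx
      rw [← SP.form_re W x, hWdef, SP.dot_combo_re]
      exact SP.convex_pos hv0 hv1' (reApos x hx) (reBpos x hx)
    have hWu : IsUnit W := SP.isUnit_of_matRe_posDef hWrepd
    -- sector condition for W
    have hsecW : ∀ x, |(star x ⬝ᵥ (matIm W) *ᵥ x).re| ≤ t * (star x ⬝ᵥ (matRe W) *ᵥ x).re := by
      intro x
      rw [← SP.form_im W x, ← SP.form_re W x, hWdef, SP.dot_combo_re, SP.dot_combo_im]
      have a1 : |v * (star x ⬝ᵥ A⁻¹ *ᵥ x).im| = v * |(star x ⬝ᵥ A⁻¹ *ᵥ x).im| := by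
        rw [abs_mul, abs_of_nonneg hv0]
      have a2 : |(1 - v) * (star x ⬝ᵥ B⁻¹ *ᵥ x).im|
          = (1 - v) * |(star x ⬝ᵥ B⁻¹ *ᵥ x).im| := by
        rw [abs_mul, abs_of_nonneg hv1']
      calc |v * (star x ⬝ᵥ A⁻¹ *ᵥ x).im + (1 - v) * (star x ⬝ᵥ B⁻¹ *ᵥ x).im|
          ≤ |v * (star x ⬝ᵥ A⁻¹ *ᵥ x).im| + |(1 - v) * (star x ⬝ᵥ B⁻¹ *ᵥ x).im| := abs_add_le _ _
        _ ≤ t * (v * (star x ⬝ᵥ A⁻¹ *ᵥ x).re + (1 - v) * (star x ⬝ᵥ B⁻¹ *ᵥ x).re) := by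
            rw [a1, a2]
            have w1 := mul_le_mul_of_nonneg_left (imA x) hv0
            have w2 := mul_le_mul_of_nonneg_left (imB x) hv1'
            nlinarith
    -- matRe W ≤ Y (forms)
    have hWleY : ∀ x, (star x ⬝ᵥ (matRe W) *ᵥ x).re ≤ (star x ⬝ᵥ Y *ᵥ x).re := by
      intro x
      rw [← SP.form_re W x, hWdef, hYdef, SP.dot_combo_re, SP.dot_combo_re]
      have w1 := mul_le_mul_of_nonneg_left (leA x) hv0
      have w2 := mul_le_mul_of_nonneg_left (leB x) hv1'
      linarith
    -- conclude step 3
    have s3 : matSpectralNorm Y⁻¹ ≤ (1 + t ^ 2) * matSpectralNorm W⁻¹ := by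
      apply SP.psd_norm_le hYpd.inv.posSemidef
        (mul_nonneg (by positivity) (SP.spectralNorm_nonneg _))
      intro x
      have c1 : (star x ⬝ᵥ Y⁻¹ *ᵥ x).re ≤ (star x ⬝ᵥ (matRe W)⁻¹ *ᵥ x).re :=
        SP.inv_anti hWrepd hYpd hWleY x
      have c2 : (star x ⬝ᵥ (matRe W)⁻¹ *ᵥ x).re ≤ (1 + t ^ 2) * (star x ⬝ᵥ W⁻¹ *ᵥ x).re :=
        SP.sec_inv_form hWrepd ht hsecW hWu x
      have c3 : (star x ⬝ᵥ W⁻¹ *ᵥ x).re ≤ matSpectralNorm W⁻¹ * SP.No x ^ 2 :=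
        SP.form_le_norm W⁻¹ x
      have c4 := mul_le_mul_of_nonneg_left c3 (by positivity : (0:ℝ) ≤ 1 + t ^ 2)
      calc (star x ⬝ᵥ Y⁻¹ *ᵥ x).re ≤ (1 + t ^ 2) * (star x ⬝ᵥ W⁻¹ *ᵥ x).re :=
            le_trans c1 c2
        _ ≤ (1 + t ^ 2) * (matSpectralNorm W⁻¹ * SP.No x ^ 2) := c4
        _ = (1 + t ^ 2) * matSpectralNorm W⁻¹ * SP.No x ^ 2 := by ring
    ----------------------------------------------------------------
    -- assemble
    ----------------------------------------------------------------
    have hmean_eq : hmean v A B = W⁻¹ := rfl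
    rw [hmean_eq]
    have hs0 : (0:ℝ) ≤ Real.sqrt (1 + t ^ 2) := Real.sqrt_nonneg _
    calc matSpectralNorm (amean v A B)
        ≤ Real.sqrt (1 + t ^ 2) * matSpectralNorm ((v : ℂ) • C + ((1 - v : ℝ) : ℂ) • D) := s1
      _ ≤ Real.sqrt (1 + t ^ 2) * ((M + m) ^ 2 / (4 * m * M) * matSpectralNorm Y⁻¹) :=
          mul_le_mul_of_nonneg_left s2 hs0
      _ ≤ Real.sqrt (1 + t ^ 2)
            * ((M + m) ^ 2 / (4 * m * M) * ((1 + t ^ 2) * matSpectralNorm W⁻¹)) := by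
          apply mul_le_mul_of_nonneg_left _ hs0
          exact mul_le_mul_of_nonneg_left s3 hK0
      _ = (Real.cos θ)⁻¹ ^ 3 * ((M + m) ^ 2 / (4 * m * M)) * matSpectralNorm W⁻¹ := by
          rw [hsqrt, hsec_eq]
          ring
end

section
/- Let 0 ≤ θ < π/2 and let A and B be n×n complex matrices in the sector class S_θ. Then ‖A!B‖ ≤ (sec⁴θ / 2) · ‖I + A‖ · ‖I + B‖, where A!B = 2(A⁻¹ + B⁻¹)⁻¹ is the harmonic mean and ‖·‖ is the spectral norm. (This is the σ = ! instance, a mean with σ ≤ ∇, of the paper's final norm theorem.) -/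
open Matrix
open scoped ComplexOrder

namespace Stmt15Aux

variable {n : ℕ}

/-- coercion into Euclidean space -/
noncomputable def ev (x : Fin n → ℂ) : EuclideanSpace ℂ (Fin n) := (WithLp.equiv 2 _).symm x

/-- Euclidean norm of a plain vector -/
noncomputable def nrm (x : Fin n → ℂ) : ℝ := ‖ev x‖

/-- real quadratic form -/
noncomputable def rq (M : Matrix (Fin n) (Fin n) ℂ) (x : Fin n → ℂ) : ℝ :=
  (star x ⬝ᵥ M *ᵥ x).re

lemma inner_ev (x y : Fin n → ℂ) : (inner ℂ (ev x) (ev y) : ℂ) = star x ⬝ᵥ y := by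
  simp [ev, PiLp.inner_apply, dotProduct, mul_comm]

lemma clm_ev (M : Matrix (Fin n) (Fin n) ℂ) (x : Fin n → ℂ) :
    Matrix.toEuclideanCLM (𝕜 := ℂ) M (ev x) = ev (M *ᵥ x) := by
  simp [ev, Matrix.toLin'_apply]

lemma nrm_sq (x : Fin n → ℂ) : (star x ⬝ᵥ x) = ((nrm x : ℂ)) ^ 2 := by
  rw [← inner_ev]
  exact inner_self_eq_norm_sq_to_K (𝕜 := ℂ) (ev x)

lemma nrm_sq_re (x : Fin n → ℂ) : (star x ⬝ᵥ x).re = nrm x ^ 2 := by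
  rw [nrm_sq, ← Complex.ofReal_pow, Complex.ofReal_re]

lemma nrm_nonneg (x : Fin n → ℂ) : 0 ≤ nrm x := norm_nonneg _

lemma dot_mulVec_mulVec (P Q : Matrix (Fin n) (Fin n) ℂ) (u v : Fin n → ℂ) :
    star (P *ᵥ u) ⬝ᵥ (Q *ᵥ v) = star u ⬝ᵥ (Pᴴ * Q) *ᵥ v := by
  rw [star_mulVec, ← Matrix.dotProduct_mulVec, Matrix.mulVec_mulVec]

lemma dot_herm (M : Matrix (Fin n) (Fin n) ℂ) (x y : Fin n → ℂ) :
    star y ⬝ᵥ Mᴴ *ᵥ x = star (star x ⬝ᵥ M *ᵥ y) := by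
  rw [Matrix.star_dotProduct, Matrix.star_mulVec, Matrix.conjTranspose_conjTranspose,
    ← Matrix.dotProduct_mulVec]


lemma rq_add (M N : Matrix (Fin n) (Fin n) ℂ) (x : Fin n → ℂ) :
    rq (M + N) x = rq M x + rq N x := by
  simp [rq, Matrix.add_mulVec, dotProduct_add]

lemma rq_smul (r : ℝ) (M : Matrix (Fin n) (Fin n) ℂ) (x : Fin n → ℂ) :
    rq ((r : ℂ) • M) x = r * rq M x := by
  simp [rq, Matrix.smul_mulVec, dotProduct_smul]

lemma rq_one (x : Fin n → ℂ) : rq 1 x = nrm x ^ 2 := by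
  simp [rq, nrm_sq_re]

lemma rq_def (M : Matrix (Fin n) (Fin n) ℂ) (x : Fin n → ℂ) :
    rq M x = (star x ⬝ᵥ M *ᵥ x).re := rfl

lemma rq_conjTranspose (M : Matrix (Fin n) (Fin n) ℂ) (x : Fin n → ℂ) :
    rq Mᴴ x = rq M x := by
  unfold rq; rw [dot_herm]; simp

lemma rq_matRe (A : Matrix (Fin n) (Fin n) ℂ) (x : Fin n → ℂ) :
    rq (matRe A) x = rq A x := by
  unfold matRe
  have : ((2⁻¹ : ℂ)) = ((2⁻¹ : ℝ) : ℂ) := by norm_num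
  rw [this, rq_smul, rq_add, rq_conjTranspose]
  ring

lemma isHermitian_matRe (A : Matrix (Fin n) (Fin n) ℂ) : (matRe A).IsHermitian := by
  unfold Matrix.IsHermitian matRe
  rw [Matrix.conjTranspose_smul, Matrix.conjTranspose_add, Matrix.conjTranspose_conjTranspose]
  rw [add_comm]
  congr 1
  simp

lemma isHermitian_matIm (A : Matrix (Fin n) (Fin n) ℂ) : (matIm A).IsHermitian := by
  unfold Matrix.IsHermitian matIm
  rw [Matrix.conjTranspose_smul, Matrix.conjTranspose_sub, Matrix.conjTranspose_conjTranspose]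
  rw [← neg_sub (A : Matrix (Fin n) (Fin n) ℂ) Aᴴ, smul_neg, ← neg_smul]
  congr 1
  have : star ((2 * Complex.I)⁻¹) = -((2 * Complex.I)⁻¹) := by
    simp [mul_inv, Complex.inv_I, Complex.star_def]
  rw [this, neg_neg]

lemma matRe_add_matIm (A : Matrix (Fin n) (Fin n) ℂ) :
    matRe A + Complex.I • matIm A = A := by
  unfold matRe matIm
  rw [smul_smul]
  have h1 : Complex.I * (2 * Complex.I)⁻¹ = (2⁻¹ : ℂ) := by
    rw [mul_inv, ← mul_assoc, mul_comm Complex.I, mul_assoc, mul_inv_cancel₀ Complex.I_ne_zero,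
      mul_one]
  rw [h1, ← smul_add]
  have : A + Aᴴ + (A - Aᴴ) = (2 : ℂ) • A := by
    rw [two_smul]; abel
  rw [this, smul_smul]
  norm_num

/-- operator-norm upper bound on quadratic/sesquilinear form -/
lemma abs_dot_le (M : Matrix (Fin n) (Fin n) ℂ) (x y : Fin n → ℂ) :
    ‖star x ⬝ᵥ M *ᵥ y‖ ≤ nrm x * (matSpectralNorm M * nrm y) := by
  have h : star x ⬝ᵥ M *ᵥ y = (inner ℂ (ev x) (Matrix.toEuclideanCLM (𝕜 := ℂ) M (ev y)) : ℂ) := by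
    rw [clm_ev, inner_ev]
  rw [h]
  calc ‖ (inner ℂ (ev x) (Matrix.toEuclideanCLM (𝕜 := ℂ) M (ev y)) : ℂ)‖
      ≤ ‖ev x‖ * ‖Matrix.toEuclideanCLM (𝕜 := ℂ) M (ev y)‖ := norm_inner_le_norm _ _
    _ ≤ nrm x * (matSpectralNorm M * nrm y) := by
        apply mul_le_mul_of_nonneg_left _ (norm_nonneg _)
        exact (Matrix.toEuclideanCLM (𝕜 := ℂ) M).le_opNorm (ev y)

lemma nrm_mulVec_le (M : Matrix (Fin n) (Fin n) ℂ) (x : Fin n → ℂ) :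
    nrm (M *ᵥ x) ≤ matSpectralNorm M * nrm x := by
  have := (Matrix.toEuclideanCLM (𝕜 := ℂ) M).le_opNorm (ev x)
  rwa [clm_ev] at this

lemma spectralNorm_le_of_bound {M : Matrix (Fin n) (Fin n) ℂ} {c : ℝ} (hc : 0 ≤ c)
    (h : ∀ x, nrm (M *ᵥ x) ≤ c * nrm x) : matSpectralNorm M ≤ c := by
  apply ContinuousLinearMap.opNorm_le_bound _ hc
  intro x
  have h2 := h (WithLp.equiv 2 _ x)
  have hx : ev (WithLp.equiv 2 (Fin n → ℂ) x) = x := rfl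
  rw [nrm, nrm, ← clm_ev, hx] at h2
  exact h2

lemma rq_le_norm (M : Matrix (Fin n) (Fin n) ℂ) (x : Fin n → ℂ) :
    rq M x ≤ matSpectralNorm M * nrm x ^ 2 := by
  calc rq M x ≤ ‖star x ⬝ᵥ M *ᵥ x‖ := Complex.re_le_norm _
    _ ≤ nrm x * (matSpectralNorm M * nrm x) := abs_dot_le M x x
    _ = matSpectralNorm M * nrm x ^ 2 := by ring

open scoped MatrixOrder in
/-- Cauchy-Schwarz for PSD forms -/
lemma cs_psd {M : Matrix (Fin n) (Fin n) ℂ} (hM : M.PosSemidef) (x y : Fin n → ℂ) :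
    ‖star x ⬝ᵥ M *ᵥ y‖ ^ 2 ≤ rq M x * rq M y := by
  set R := CFC.sqrt M with hR
  have hRh : R.IsHermitian := (CFC.sqrt_nonneg M).posSemidef.isHermitian
  have hRR : R * R = M := CFC.sqrt_mul_sqrt_self M hM.nonneg
  have key : ∀ u v : Fin n → ℂ, star u ⬝ᵥ M *ᵥ v = star (R *ᵥ u) ⬝ᵥ (R *ᵥ v) := by
    intro u v
    rw [dot_mulVec_mulVec, hRh.eq, hRR]
  have h1 : ∀ u : Fin n → ℂ, rq M u = nrm (R *ᵥ u) ^ 2 := by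
    intro u
    rw [rq, key, nrm_sq_re]
  rw [h1, h1, key]
  have h2 : star (R *ᵥ x) ⬝ᵥ (R *ᵥ y) = (inner ℂ (ev (R *ᵥ x)) (ev (R *ᵥ y)) : ℂ) := (inner_ev _ _).symm
  rw [h2]
  have := norm_inner_le_norm (𝕜 := ℂ) (ev (R *ᵥ x)) (ev (R *ᵥ y))
  calc ‖(inner ℂ (ev (R *ᵥ x)) (ev (R *ᵥ y)) : ℂ)‖ ^ 2
      ≤ (‖ev (R *ᵥ x)‖ * ‖ev (R *ᵥ y)‖) ^ 2 := by
        apply pow_le_pow_left₀ (norm_nonneg _) this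
    _ = nrm (R *ᵥ x) ^ 2 * nrm (R *ᵥ y) ^ 2 := by rw [nrm, nrm]; ring

/-- norm of a PSD matrix from a quadratic-form bound -/
lemma psd_norm_le {M : Matrix (Fin n) (Fin n) ℂ} (hM : M.PosSemidef) {c : ℝ} (hc : 0 ≤ c)
    (h : ∀ x, rq M x ≤ c * nrm x ^ 2) : matSpectralNorm M ≤ c := by
  apply spectralNorm_le_of_bound hc
  intro x
  have key : ‖star (M *ᵥ x) ⬝ᵥ M *ᵥ x‖ ^ 2 ≤ rq M (M *ᵥ x) * rq M x :=
    cs_psd hM (M *ᵥ x) x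
  have h2 : star (M *ᵥ x) ⬝ᵥ (M *ᵥ x) = ((nrm (M *ᵥ x) : ℂ)) ^ 2 := nrm_sq _
  rw [h2] at key
  have h3 : ‖((nrm (M *ᵥ x) : ℂ)) ^ 2‖ = nrm (M *ᵥ x) ^ 2 := by
    rw [norm_pow, Complex.norm_real, Real.norm_eq_abs, abs_of_nonneg (nrm_nonneg _)]
  rw [h3] at key
  have h4 := h (M *ᵥ x)
  have h5 := h x
  have h6 := nrm_nonneg (M *ᵥ x)
  have h7 := nrm_nonneg x
  have h8 : 0 ≤ rq M x := by
    have := (Complex.le_def.mp (hM.dotProduct_mulVec_nonneg x)).1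
    simpa [rq] using this
  by_cases ha : nrm (M *ᵥ x) = 0
  · rw [ha]; positivity
  · have hapos : 0 < nrm (M *ᵥ x) := lt_of_le_of_ne h6 (Ne.symm ha)
    have hprod : (nrm (M *ᵥ x) ^ 2) ^ 2 ≤ (c * nrm (M *ᵥ x) ^ 2) * (c * nrm x ^ 2) :=
      le_trans key (mul_le_mul h4 h5 h8 (by positivity))
    have h9 : nrm (M *ᵥ x) ^ 2 ≤ (c * nrm x) ^ 2 := by nlinarith [pow_pos hapos 2]
    nlinarith [mul_nonneg hc h7]

lemma psd_of_rq_nonneg {M : Matrix (Fin n) (Fin n) ℂ} (hM : M.IsHermitian)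
    (h : ∀ x, 0 ≤ rq M x) : M.PosSemidef := by
  refine Matrix.PosSemidef.of_dotProduct_mulVec_nonneg hM fun x => ?_
  have hreal : star x ⬝ᵥ M *ᵥ x = star (star x ⬝ᵥ M *ᵥ x) := by
    conv_lhs => rw [← hM.eq]
    rw [dot_herm]
  rw [Complex.le_def]
  constructor
  · exact h x
  · have := congrArg Complex.im hreal
    simp only [Complex.star_def, Complex.conj_im] at this
    simp only [Complex.zero_im]
    linarith


lemma ev_add (u v : Fin n → ℂ) : ev (u + v) = ev u + ev v := rfl
lemma ev_sub (u v : Fin n → ℂ) : ev (u - v) = ev u - ev v := rfl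
lemma ev_smul (c : ℂ) (u : Fin n → ℂ) : ev (c • u) = c • ev u := rfl

lemma nrm_zero : nrm (0 : Fin n → ℂ) = 0 := by
  have : ev (0 : Fin n → ℂ) = 0 := rfl
  rw [nrm, this, norm_zero]

lemma nrm_eq_zero {x : Fin n → ℂ} : nrm x = 0 ↔ x = 0 := by
  rw [nrm, norm_eq_zero]
  constructor
  · intro h
    have := congrArg (WithLp.equiv 2 (Fin n → ℂ)) h
    simpa [ev] using this
  · intro h; subst h; rfl

lemma nrm_smul (c : ℂ) (x : Fin n → ℂ) : nrm (c • x) = ‖c‖ * nrm x := by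
  rw [nrm, ev_smul, norm_smul, nrm]

/-- Polarization: a Hermitian matrix with numerical radius bound `t` has norm bound `t`. -/
lemma herm_mulVec_bound {T : Matrix (Fin n) (Fin n) ℂ} (hT : T.IsHermitian) {t : ℝ}
    (h : ∀ x, |rq T x| ≤ t * nrm x ^ 2) : ∀ x, nrm (T *ᵥ x) ≤ t * nrm x := by
  have key : ∀ u v : Fin n → ℂ, 4 * (star u ⬝ᵥ T *ᵥ v).re ≤ 2 * t * (nrm u ^ 2 + nrm v ^ 2) := by
    intro u v
    have hconj : star v ⬝ᵥ T *ᵥ u = star (star u ⬝ᵥ T *ᵥ v) := by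
      conv_lhs => rw [← hT.eq]
      exact dot_herm T u v
    have e1 : rq T (u + v) = rq T u + rq T v + 2 * (star u ⬝ᵥ T *ᵥ v).re := by
      unfold rq
      rw [show star (u + v) ⬝ᵥ T *ᵥ (u + v)
          = (star u ⬝ᵥ T *ᵥ u) + (star v ⬝ᵥ T *ᵥ v)
            + ((star u ⬝ᵥ T *ᵥ v) + (star v ⬝ᵥ T *ᵥ u)) by
        simp only [star_add, Matrix.mulVec_add, dotProduct_add, add_dotProduct]
        ring]
      rw [hconj]
      simp only [Complex.add_re, Complex.star_def, Complex.conj_re]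
      ring
    have e2 : rq T (u - v) = rq T u + rq T v - 2 * (star u ⬝ᵥ T *ᵥ v).re := by
      unfold rq
      rw [show star (u - v) ⬝ᵥ T *ᵥ (u - v)
          = (star u ⬝ᵥ T *ᵥ u) + (star v ⬝ᵥ T *ᵥ v)
            - ((star u ⬝ᵥ T *ᵥ v) + (star v ⬝ᵥ T *ᵥ u)) by
        simp only [star_sub, Matrix.mulVec_sub, dotProduct_sub, sub_dotProduct]
        ring]
      rw [hconj]
      simp only [Complex.sub_re, Complex.add_re, Complex.star_def, Complex.conj_re]
      ring
    have hp : nrm (u + v) ^ 2 + nrm (u - v) ^ 2 = 2 * (nrm u ^ 2 + nrm v ^ 2) := by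
      have := parallelogram_law_with_norm ℂ (ev u) (ev v)
      rw [nrm, nrm, nrm, nrm, ev_add, ev_sub]
      nlinarith [this]
    have h1 := h (u + v)
    have h2 := h (u - v)
    have a1 := le_abs_self (rq T (u + v))
    have a2 := neg_abs_le (rq T (u - v))
    calc 4 * (star u ⬝ᵥ T *ᵥ v).re = rq T (u + v) - rq T (u - v) := by linarith
      _ ≤ t * nrm (u + v) ^ 2 + t * nrm (u - v) ^ 2 := by linarith
      _ = t * (nrm (u + v) ^ 2 + nrm (u - v) ^ 2) := by ring
      _ = t * (2 * (nrm u ^ 2 + nrm v ^ 2)) := by rw [hp]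
      _ = 2 * t * (nrm u ^ 2 + nrm v ^ 2) := by ring
  intro x
  by_cases hx : x = 0
  · subst hx
    simp [Matrix.mulVec_zero, nrm_zero]
  · have hb : 0 < nrm x := lt_of_le_of_ne (nrm_nonneg x) (fun hh => hx (nrm_eq_zero.mp hh.symm))
    have ht : 0 ≤ t := by
      have := (abs_nonneg (rq T x)).trans (h x)
      nlinarith [this, pow_pos hb 2]
    by_cases hTx : T *ᵥ x = 0
    · rw [hTx, nrm_zero]; positivity
    · have ha : 0 < nrm (T *ᵥ x) :=
        lt_of_le_of_ne (nrm_nonneg _) (fun hh => hTx (nrm_eq_zero.mp hh.symm))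
      set a := nrm (T *ᵥ x) with haa
      set b := nrm x with hbb
      set c := Real.sqrt (b / a) with hc
      set d := Real.sqrt (a / b) with hd
      have hcpos : 0 < c := Real.sqrt_pos.mpr (by positivity)
      have hdpos : 0 < d := Real.sqrt_pos.mpr (by positivity)
      have hcd : c * d = 1 := by
        rw [hc, hd, ← Real.sqrt_mul (by positivity)]
        rw [show b / a * (a / b) = 1 by field_simp]
        exact Real.sqrt_one
      have hc2 : c ^ 2 = b / a := Real.sq_sqrt (by positivity)
      have hd2 : d ^ 2 = a / b := Real.sq_sqrt (by positivity)
      have hdot : (star ((c : ℂ) • (T *ᵥ x)) ⬝ᵥ T *ᵥ ((d : ℂ) • x)).re = c * d * a ^ 2 := by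
        rw [Matrix.mulVec_smul, star_smul, smul_dotProduct, dotProduct_smul]
        rw [nrm_sq (T *ᵥ x)]
        simp only [smul_eq_mul, Complex.star_def, Complex.conj_ofReal]
        rw [show ((c : ℂ)) * ((d : ℂ) * ((a : ℂ)) ^ 2) = (((c * d * a ^ 2 : ℝ)) : ℂ) by push_cast; ring]
        exact Complex.ofReal_re _
      have hku := key ((c : ℂ) • (T *ᵥ x)) ((d : ℂ) • x)
      rw [hdot] at hku
      have hnu : nrm ((c : ℂ) • (T *ᵥ x)) ^ 2 = c ^ 2 * a ^ 2 := by
        rw [nrm_smul, Complex.norm_real, Real.norm_eq_abs, abs_of_pos hcpos]; ring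
      have hnv : nrm ((d : ℂ) • x) ^ 2 = d ^ 2 * b ^ 2 := by
        rw [nrm_smul, Complex.norm_real, Real.norm_eq_abs, abs_of_pos hdpos]; ring
      rw [hnu, hnv, hcd, hc2, hd2] at hku
      have hab : b / a * a ^ 2 = a * b := by field_simp
      have hab2 : a / b * b ^ 2 = a * b := by field_simp
      rw [hab, hab2] at hku
      -- hku : 4 * (1 * a^2) ≤ 2 * t * (a*b + a*b)
      nlinarith [hku]
  

lemma rq_posdef_pos {M : Matrix (Fin n) (Fin n) ℂ} (hM : M.PosDef) {x : Fin n → ℂ}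
    (hx : x ≠ 0) : 0 < rq M x :=
  lt_of_lt_of_eq (hM.re_dotProduct_pos hx) (congrFun RCLike.re_eq_complex_re _)

lemma rq_psd_nonneg {M : Matrix (Fin n) (Fin n) ℂ} (hM : M.PosSemidef) (x : Fin n → ℂ) :
    0 ≤ rq M x :=
  le_of_le_of_eq (hM.re_dotProduct_nonneg x) (congrFun RCLike.re_eq_complex_re _)

lemma isUnit_of_rq_pos {M : Matrix (Fin n) (Fin n) ℂ}
    (h : ∀ x, x ≠ 0 → 0 < rq M x) : IsUnit M := by
  rw [← Matrix.mulVec_injective_iff_isUnit]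
  intro u v huv
  by_contra hne
  have hz : u - v ≠ 0 := sub_ne_zero.mpr hne
  have h0 : M *ᵥ (u - v) = 0 := by
    rw [Matrix.mulVec_sub, huv, sub_self]
  have := h (u - v) hz
  rw [rq, h0, dotProduct_zero] at this
  simp at this

lemma rq_mulVec (M P : Matrix (Fin n) (Fin n) ℂ) (u : Fin n → ℂ) :
    rq M (P *ᵥ u) = rq (Pᴴ * M * P) u := by
  unfold rq
  rw [Matrix.mulVec_mulVec, dot_mulVec_mulVec, ← Matrix.mul_assoc]

section Sector

variable {θ : ℝ} {A : Matrix (Fin n) (Fin n) ℂ}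

lemma sector_isUnit (hA : sectorClass θ A) : IsUnit A := by
  apply isUnit_of_rq_pos
  intro x hx
  have := rq_posdef_pos hA.1 hx
  rwa [rq_matRe] at this

open scoped MatrixOrder in
lemma sector_GHinvG (hA : sectorClass θ A) :
    ∀ z, rq (matRe A)⁻¹ (matIm A *ᵥ z) ≤ Real.tan θ ^ 2 * rq (matRe A) z := by
  set H := matRe A with hHdef
  set G := matIm A with hGdef
  have hH : H.PosDef := hA.1
  have hHh : H.IsHermitian := hH.isHermitian
  set R := CFC.sqrt H with hRdef
  have hRh : R.IsHermitian := (CFC.sqrt_nonneg H).posSemidef.isHermitian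
  have hRR : R * R = H := CFC.sqrt_mul_sqrt_self H hH.posSemidef.nonneg
  have hHu : IsUnit H.det := (Matrix.isUnit_iff_isUnit_det H).mp hH.isUnit
  have hRu : IsUnit R.det := by
    have h2 : R.det * R.det = H.det := by rw [← Matrix.det_mul, hRR]
    rw [← h2] at hHu
    exact isUnit_of_mul_isUnit_left hHu
  have hRiR : R⁻¹ * R = 1 := Matrix.nonsing_inv_mul R hRu
  have hRRi : R * R⁻¹ = 1 := Matrix.mul_nonsing_inv R hRu
  have hHinv : H⁻¹ = R⁻¹ * R⁻¹ := by rw [← hRR, Matrix.mul_inv_rev]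
  have hRih : (R⁻¹).IsHermitian := hRh.inv
  set T := R⁻¹ * G * R⁻¹ with hTdef
  have hGh : G.IsHermitian := isHermitian_matIm A
  have hTh : T.IsHermitian := by
    have h3 : T = (R⁻¹)ᴴ * G * R⁻¹ := by rw [hRih.eq]
    rw [h3]
    exact Matrix.isHermitian_conjTranspose_mul_mul _ hGh
  have hRHR : (R⁻¹)ᴴ * H * R⁻¹ = 1 := by
    rw [hRih.eq, ← hRR, ← Matrix.mul_assoc, hRiR, Matrix.one_mul, hRRi]
  have hbound : ∀ w, |rq T w| ≤ Real.tan θ * nrm w ^ 2 := by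
    intro w
    have h1 : rq G (R⁻¹ *ᵥ w) = rq T w := by rw [rq_mulVec G R⁻¹ w, hRih.eq, ← hTdef]
    have h2 : rq H (R⁻¹ *ᵥ w) = nrm w ^ 2 := by rw [rq_mulVec H R⁻¹ w, hRHR, rq_one]
    have h3 := hA.2 (R⁻¹ *ᵥ w)
    rw [← hGdef, ← hHdef] at h3
    rw [show (star (R⁻¹ *ᵥ w) ⬝ᵥ G.mulVec (R⁻¹ *ᵥ w)).re = rq G (R⁻¹ *ᵥ w) from rfl,
      show (star (R⁻¹ *ᵥ w) ⬝ᵥ H.mulVec (R⁻¹ *ᵥ w)).re = rq H (R⁻¹ *ᵥ w) from rfl,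
      h1, h2] at h3
    exact h3
  have hTbound := herm_mulVec_bound hTh hbound
  intro z
  have hGRTR : R * T * R = G := by
    rw [hTdef, ← Matrix.mul_assoc, ← Matrix.mul_assoc, hRRi, Matrix.one_mul,
      Matrix.mul_assoc, hRiR, Matrix.mul_one]
  have hGz : G *ᵥ z = R *ᵥ (T *ᵥ (R *ᵥ z)) := by
    rw [Matrix.mulVec_mulVec, Matrix.mulVec_mulVec, hGRTR]
  have haux : R * (R⁻¹ * R⁻¹) * R = 1 := by
    rw [← Matrix.mul_assoc R R⁻¹ R⁻¹, hRRi, Matrix.one_mul, hRiR]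
  have key1 : rq H⁻¹ (G *ᵥ z) = nrm (T *ᵥ (R *ᵥ z)) ^ 2 := by
    rw [hGz, rq_mulVec H⁻¹ R (T *ᵥ (R *ᵥ z)), hRh.eq, hHinv, haux, rq_one]
  have key2 : nrm (R *ᵥ z) ^ 2 = rq H z := by
    rw [← rq_one, rq_mulVec 1 R z, hRh.eq, Matrix.mul_one, hRR]
  calc rq H⁻¹ (G *ᵥ z) = nrm (T *ᵥ (R *ᵥ z)) ^ 2 := key1
    _ ≤ (Real.tan θ * nrm (R *ᵥ z)) ^ 2 := by
        apply pow_le_pow_left₀ (nrm_nonneg _) (hTbound _)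
    _ = Real.tan θ ^ 2 * nrm (R *ᵥ z) ^ 2 := by ring
    _ = Real.tan θ ^ 2 * rq H z := by rw [key2]

lemma sector_inv_rq (hA : sectorClass θ A) (hcos : 0 < Real.cos θ) :
    ∀ x, Real.cos θ ^ 2 * rq (matRe A)⁻¹ x ≤ rq A⁻¹ x := by
  have hid : Real.cos θ ^ 2 * (1 + Real.tan θ ^ 2) = 1 := by
    have hcc : Real.cos θ ^ 2 ≠ 0 := by positivity
    rw [Real.tan_eq_sin_div_cos, div_pow, mul_add, mul_one, mul_div_cancel₀ _ hcc]
    linarith [Real.sin_sq_add_cos_sq θ]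
  set H := matRe A with hHdef
  set G := matIm A with hGdef
  have hH : H.PosDef := hA.1
  have hHh : H.IsHermitian := hH.isHermitian
  have hGh : G.IsHermitian := isHermitian_matIm A
  have hHu : IsUnit H.det := (Matrix.isUnit_iff_isUnit_det H).mp hH.isUnit
  have hAu : IsUnit A := sector_isUnit hA
  have hAd : IsUnit A.det := (Matrix.isUnit_iff_isUnit_det A).mp hAu
  have hHHi : H * H⁻¹ = 1 := Matrix.mul_nonsing_inv H hHu
  have hHiH : H⁻¹ * H = 1 := Matrix.nonsing_inv_mul H hHu
  have hAAi : A * A⁻¹ = 1 := Matrix.mul_nonsing_inv A hAd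
  have hAiA : A⁻¹ * A = 1 := Matrix.nonsing_inv_mul A hAd
  have hAeq : H + Complex.I • G = A := matRe_add_matIm A
  have hAH : Aᴴ = H + (-Complex.I) • G := by
    rw [← hAeq, Matrix.conjTranspose_add, Matrix.conjTranspose_smul, hHh.eq, hGh.eq]
    congr 1
    rw [Complex.star_def, Complex.conj_I]
  have hc1 : ∀ X : Matrix (Fin n) (Fin n) ℂ, H * (H⁻¹ * X) = X := fun X => by
    rw [← Matrix.mul_assoc, hHHi, Matrix.one_mul]
  have expand : Aᴴ * H⁻¹ * A = H + G * H⁻¹ * G := by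
    rw [hAH]
    conv_lhs => rw [← hAeq]
    simp only [Matrix.add_mul, Matrix.mul_add, smul_mul_assoc, mul_smul_comm, smul_smul,
      Matrix.mul_assoc, hc1, hHiH, hHHi, Matrix.mul_one, Matrix.one_mul, neg_mul,
      Complex.I_mul_I, mul_neg, neg_neg, one_smul, neg_smul, smul_add, smul_neg]
    abel
  intro x
  set y := A⁻¹ *ᵥ x with hy
  have hxy : A *ᵥ y = x := by
    rw [hy, Matrix.mulVec_mulVec, hAAi, Matrix.one_mulVec]
  have e1 : rq A⁻¹ x = rq H y := by
    rw [← hxy, rq_mulVec A⁻¹ A y, Matrix.mul_assoc, hAiA, Matrix.mul_one, rq_conjTranspose,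
      ← rq_matRe]
  have e2b : rq H⁻¹ (G *ᵥ y) = rq (G * H⁻¹ * G) y := by
    rw [rq_mulVec H⁻¹ G y, hGh.eq]
  have e2 : rq H⁻¹ x = rq H y + rq H⁻¹ (G *ᵥ y) := by
    rw [← hxy, rq_mulVec H⁻¹ A y, expand, rq_add, e2b]
  have hb := sector_GHinvG hA y
  rw [← hHdef, ← hGdef] at hb
  have hHy : 0 ≤ rq H y := rq_psd_nonneg hH.posSemidef y
  rw [e1, e2]
  have h4 : Real.cos θ ^ 2 * rq H⁻¹ (G *ᵥ y) ≤ Real.cos θ ^ 2 * (Real.tan θ ^ 2 * rq H y) :=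
    mul_le_mul_of_nonneg_left hb (sq_nonneg _)
  nlinarith [h4, hHy, hid]

end Sector



lemma rq_sub (M N : Matrix (Fin n) (Fin n) ℂ) (x : Fin n → ℂ) :
    rq (M - N) x = rq M x - rq N x := by
  simp [rq, Matrix.sub_mulVec, dotProduct_sub]

set_option synthInstance.maxHeartbeats 1000000 in
lemma spectralNorm_smul (c : ℂ) (M : Matrix (Fin n) (Fin n) ℂ) :
    matSpectralNorm (c • M) = ‖c‖ * matSpectralNorm M := by
  rw [matSpectralNorm, _root_.map_smul]
  exact norm_smul c (Matrix.toEuclideanCLM (𝕜 := ℂ) M)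

/-- harmonic mean is at most the arithmetic mean, at quadratic-form level -/
lemma hm_le_am {H K : Matrix (Fin n) (Fin n) ℂ} (hH : H.PosDef) (hK : K.PosDef) :
    ∀ x, rq (H⁻¹ + K⁻¹)⁻¹ x ≤ (4 : ℝ)⁻¹ * (rq H x + rq K x) := by
  set S := H + K with hSdef
  have hS : S.PosDef := hH.add hK
  have hHd : IsUnit H.det := (Matrix.isUnit_iff_isUnit_det H).mp hH.isUnit
  have hKd : IsUnit K.det := (Matrix.isUnit_iff_isUnit_det K).mp hK.isUnit
  have hSd : IsUnit S.det := (Matrix.isUnit_iff_isUnit_det S).mp hS.isUnit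
  have hHiH : H⁻¹ * H = 1 := Matrix.nonsing_inv_mul H hHd
  have hSiS : S⁻¹ * S = 1 := Matrix.nonsing_inv_mul S hSd
  have hSSi : S * S⁻¹ = 1 := Matrix.mul_nonsing_inv S hSd
  have hcK : ∀ X : Matrix (Fin n) (Fin n) ℂ, K⁻¹ * (K * X) = X := fun X => by
    rw [← Matrix.mul_assoc, Matrix.nonsing_inv_mul K hKd, Matrix.one_mul]
  have hcS : ∀ X : Matrix (Fin n) (Fin n) ℂ, S * (S⁻¹ * X) = X := fun X => by
    rw [← Matrix.mul_assoc, hSSi, Matrix.one_mul]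
  have hKS : K = S - H := by rw [hSdef]; abel
  have hSiK : S⁻¹ * K = 1 - S⁻¹ * H := by
    rw [hKS, Matrix.mul_sub, hSiS]
  have k0 : K * (S⁻¹ * H) = H - H * (S⁻¹ * H) := by
    conv_lhs => rw [hKS]
    rw [Matrix.sub_mul, hcS]
  have hQ : (H⁻¹ + K⁻¹)⁻¹ = K * S⁻¹ * H := by
    apply Matrix.inv_eq_right_inv
    rw [Matrix.mul_assoc K S⁻¹ H, Matrix.add_mul, hcK, k0, Matrix.mul_sub, hHiH,
      show H⁻¹ * (H * (S⁻¹ * H)) = S⁻¹ * H from by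
        rw [← Matrix.mul_assoc, hHiH, Matrix.one_mul],
      sub_add_cancel]
  have k2 : H * (S⁻¹ * K) = H - H * (S⁻¹ * H) := by
    rw [hSiK, Matrix.mul_sub, Matrix.mul_one]
  have k3 : K * (S⁻¹ * K) = K - K * (S⁻¹ * H) := by
    rw [hSiK, Matrix.mul_sub, Matrix.mul_one]
  have ident : (K - H) * S⁻¹ * (K - H) = S - ((4 : ℝ) : ℂ) • (K * (S⁻¹ * H)) := by
    rw [Matrix.mul_assoc, Matrix.mul_sub S⁻¹ K H, Matrix.sub_mul, Matrix.mul_sub,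
      Matrix.mul_sub, k3, k2, k0, hSdef]
    push_cast
    module
  intro x
  have hpos : 0 ≤ rq ((K - H) * S⁻¹ * (K - H)) x := by
    have hherm : (K - H).IsHermitian := hK.isHermitian.sub hH.isHermitian
    have : rq ((K - H) * S⁻¹ * (K - H)) x = rq S⁻¹ ((K - H) *ᵥ x) := by
      rw [rq_mulVec S⁻¹ (K - H) x, hherm.eq]
    rw [this]
    exact rq_psd_nonneg hS.inv.posSemidef _
  have hexp : rq ((K - H) * S⁻¹ * (K - H)) x
      = rq H x + rq K x - 4 * rq ((H⁻¹ + K⁻¹)⁻¹) x := by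
    rw [hQ, Matrix.mul_assoc K S⁻¹ H, ident, rq_sub, rq_smul, hSdef, rq_add]
  linarith [hpos, hexp]

end Stmt15Aux

set_option maxHeartbeats 1000000 in
open Stmt15Aux in
theorem stmt15 {n : ℕ} (θ : ℝ) (hθ0 : 0 ≤ θ) (hθ1 : θ < Real.pi / 2)
    (A B : Matrix (Fin n) (Fin n) ℂ)
    (hA : sectorClass θ A) (hB : sectorClass θ B) :
    matSpectralNorm ((2 : ℂ) • (A⁻¹ + B⁻¹)⁻¹) ≤
      (Real.cos θ)⁻¹ ^ 4 / 2 * (matSpectralNorm (1 + A) * matSpectralNorm (1 + B)) := by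
  have hc : 0 < Real.cos θ := Real.cos_pos_of_mem_Ioo ⟨by linarith [Real.pi_pos], hθ1⟩
  have hcle : Real.cos θ ≤ 1 := Real.cos_le_one θ
  rcases Nat.eq_zero_or_pos n with hn | hn
  · subst hn
    have hz : ∀ M : Matrix (Fin 0) (Fin 0) ℂ, matSpectralNorm M = 0 := by
      intro M
      refine le_antisymm ?_ (norm_nonneg _)
      refine ContinuousLinearMap.opNorm_le_bound _ le_rfl ?_
      intro x
      have hx : x = 0 := by ext i; exact i.elim0
      simp [hx]
    rw [hz, hz, hz]
    norm_num
  · have hHA : (matRe A).PosDef := hA.1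
    have hKB : (matRe B).PosDef := hB.1
    have hPpd : ((matRe A)⁻¹ + (matRe B)⁻¹).PosDef := hHA.inv.add hKB.inv
    have hQpd : (((matRe A)⁻¹ + (matRe B)⁻¹)⁻¹).PosDef := hPpd.inv
    have hPd : IsUnit ((matRe A)⁻¹ + (matRe B)⁻¹).det :=
      (Matrix.isUnit_iff_isUnit_det _).mp hPpd.isUnit
    have boundA := sector_inv_rq hA hc
    have boundB := sector_inv_rq hB hc
    have hCrq : ∀ x, Real.cos θ ^ 2 * rq ((matRe A)⁻¹ + (matRe B)⁻¹) x
        ≤ rq (A⁻¹ + B⁻¹) x := by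
      intro x
      rw [rq_add, rq_add]
      have h1 := boundA x
      have h2 := boundB x
      nlinarith [h1, h2]
    have hCu : IsUnit (A⁻¹ + B⁻¹) := by
      apply isUnit_of_rq_pos
      intro x hx
      have h1 : 0 < rq ((matRe A)⁻¹ + (matRe B)⁻¹) x := rq_posdef_pos hPpd hx
      have h2 := hCrq x
      nlinarith [pow_pos hc 2]
    have hCd : IsUnit (A⁻¹ + B⁻¹).det := (Matrix.isUnit_iff_isUnit_det _).mp hCu
    have hQnn : 0 ≤ matSpectralNorm ((matRe A)⁻¹ + (matRe B)⁻¹)⁻¹ := norm_nonneg _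
    -- Step 1: ‖(A⁻¹+B⁻¹)⁻¹‖ ≤ ‖Q‖ / cos²θ
    have step1 : matSpectralNorm (A⁻¹ + B⁻¹)⁻¹
        ≤ matSpectralNorm ((matRe A)⁻¹ + (matRe B)⁻¹)⁻¹ / Real.cos θ ^ 2 := by
      apply spectralNorm_le_of_bound (by positivity)
      intro x
      by_cases hy0 : (A⁻¹ + B⁻¹)⁻¹ *ᵥ x = 0
      · rw [hy0, nrm_zero]
        exact mul_nonneg (div_nonneg hQnn (by positivity)) (nrm_nonneg x)
      · have hyn : 0 < nrm ((A⁻¹ + B⁻¹)⁻¹ *ᵥ x) :=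
          lt_of_le_of_ne (nrm_nonneg _) (fun h => hy0 (nrm_eq_zero.mp h.symm))
        have hxy : (A⁻¹ + B⁻¹) *ᵥ ((A⁻¹ + B⁻¹)⁻¹ *ᵥ x) = x := by
          rw [Matrix.mulVec_mulVec, Matrix.mul_nonsing_inv _ hCd, Matrix.one_mulVec]
        have hQPy : ((matRe A)⁻¹ + (matRe B)⁻¹)⁻¹ *ᵥ
            (((matRe A)⁻¹ + (matRe B)⁻¹) *ᵥ ((A⁻¹ + B⁻¹)⁻¹ *ᵥ x))
            = (A⁻¹ + B⁻¹)⁻¹ *ᵥ x := by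
          rw [Matrix.mulVec_mulVec, Matrix.nonsing_inv_mul _ hPd, Matrix.one_mulVec]
        have cs := cs_psd hQpd.posSemidef ((A⁻¹ + B⁻¹)⁻¹ *ᵥ x)
          (((matRe A)⁻¹ + (matRe B)⁻¹) *ᵥ ((A⁻¹ + B⁻¹)⁻¹ *ᵥ x))
        rw [hQPy, nrm_sq ((A⁻¹ + B⁻¹)⁻¹ *ᵥ x)] at cs
        rw [show ‖((nrm ((A⁻¹ + B⁻¹)⁻¹ *ᵥ x) : ℂ)) ^ 2‖
            = nrm ((A⁻¹ + B⁻¹)⁻¹ *ᵥ x) ^ 2 from by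
          rw [norm_pow, Complex.norm_real, Real.norm_eq_abs, abs_of_nonneg (nrm_nonneg _)]] at cs
        have hrqQP : rq ((matRe A)⁻¹ + (matRe B)⁻¹)⁻¹
            (((matRe A)⁻¹ + (matRe B)⁻¹) *ᵥ ((A⁻¹ + B⁻¹)⁻¹ *ᵥ x))
            = rq ((matRe A)⁻¹ + (matRe B)⁻¹) ((A⁻¹ + B⁻¹)⁻¹ *ᵥ x) := by
          rw [rq_mulVec (((matRe A)⁻¹ + (matRe B)⁻¹)⁻¹) ((matRe A)⁻¹ + (matRe B)⁻¹)
            ((A⁻¹ + B⁻¹)⁻¹ *ᵥ x), hPpd.isHermitian.eq,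
            Matrix.mul_nonsing_inv _ hPd, Matrix.one_mul]
        rw [hrqQP] at cs
        -- cs : (nrm y ^ 2) ^ 2 ≤ rq Q y * rq P y
        have hrle := rq_le_norm ((matRe A)⁻¹ + (matRe B)⁻¹)⁻¹ ((A⁻¹ + B⁻¹)⁻¹ *ᵥ x)
        have hPnn := rq_psd_nonneg hPpd.posSemidef ((A⁻¹ + B⁻¹)⁻¹ *ᵥ x)
        have hA1 : nrm ((A⁻¹ + B⁻¹)⁻¹ *ᵥ x) ^ 2
            ≤ matSpectralNorm ((matRe A)⁻¹ + (matRe B)⁻¹)⁻¹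
              * rq ((matRe A)⁻¹ + (matRe B)⁻¹) ((A⁻¹ + B⁻¹)⁻¹ *ᵥ x) := by
          nlinarith [cs, hrle, hPnn, pow_pos hyn 2]
        have hA2 := hCrq ((A⁻¹ + B⁻¹)⁻¹ *ᵥ x)
        have hA3 : rq (A⁻¹ + B⁻¹) ((A⁻¹ + B⁻¹)⁻¹ *ᵥ x)
            ≤ nrm ((A⁻¹ + B⁻¹)⁻¹ *ᵥ x) * nrm x := by
          rw [rq_def, hxy]
          calc (star ((A⁻¹ + B⁻¹)⁻¹ *ᵥ x) ⬝ᵥ x).re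
              ≤ ‖star ((A⁻¹ + B⁻¹)⁻¹ *ᵥ x) ⬝ᵥ x‖ := Complex.re_le_norm _
            _ = ‖(inner ℂ (ev ((A⁻¹ + B⁻¹)⁻¹ *ᵥ x)) (ev x) : ℂ)‖ := by
                rw [inner_ev]
            _ ≤ ‖ev ((A⁻¹ + B⁻¹)⁻¹ *ᵥ x)‖ * ‖ev x‖ := norm_inner_le_norm _ _
        have s1 : Real.cos θ ^ 2 * nrm ((A⁻¹ + B⁻¹)⁻¹ *ᵥ x) ^ 2
            ≤ matSpectralNorm ((matRe A)⁻¹ + (matRe B)⁻¹)⁻¹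
              * (nrm ((A⁻¹ + B⁻¹)⁻¹ *ᵥ x) * nrm x) := by
          nlinarith [hA1, hA2, hA3, hQnn, pow_pos hc 2, hPnn]
        rw [div_mul_eq_mul_div, le_div_iff₀ (pow_pos hc 2)]
        nlinarith [s1, hyn]
    -- Step 2 : bound on ‖Q‖
    have hHa : ∀ x, rq (matRe A) x ≤ (matSpectralNorm (1 + A) - 1) * nrm x ^ 2 := by
      intro x
      have h1 : rq (1 + A) x = nrm x ^ 2 + rq (matRe A) x := by
        rw [rq_add, rq_one, rq_matRe]
      have h2 := rq_le_norm (1 + A) x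
      nlinarith [h1, h2]
    have hKb : ∀ x, rq (matRe B) x ≤ (matSpectralNorm (1 + B) - 1) * nrm x ^ 2 := by
      intro x
      have h1 : rq (1 + B) x = nrm x ^ 2 + rq (matRe B) x := by
        rw [rq_add, rq_one, rq_matRe]
      have h2 := rq_le_norm (1 + B) x
      nlinarith [h1, h2]
    have hunit : ∃ x0 : Fin n → ℂ, 0 < nrm x0 := by
      refine ⟨fun _ => 1, ?_⟩
      have hne : (fun _ : Fin n => (1 : ℂ)) ≠ 0 := by
        intro h
        have := congrFun h ⟨0, hn⟩
        simpa using this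
      exact lt_of_le_of_ne (nrm_nonneg _) (fun h => hne (nrm_eq_zero.mp h.symm))
    obtain ⟨x0, hx0⟩ := hunit
    have ha1 : 1 ≤ matSpectralNorm (1 + A) := by
      have h1 : rq (1 + A) x0 = nrm x0 ^ 2 + rq (matRe A) x0 := by
        rw [rq_add, rq_one, rq_matRe]
      have h2 := rq_le_norm (1 + A) x0
      have h3 : 0 ≤ rq (matRe A) x0 := rq_psd_nonneg hHA.posSemidef x0
      nlinarith [pow_pos hx0 2]
    have hb1 : 1 ≤ matSpectralNorm (1 + B) := by
      have h1 : rq (1 + B) x0 = nrm x0 ^ 2 + rq (matRe B) x0 := by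
        rw [rq_add, rq_one, rq_matRe]
      have h2 := rq_le_norm (1 + B) x0
      have h3 : 0 ≤ rq (matRe B) x0 := rq_psd_nonneg hKB.posSemidef x0
      nlinarith [pow_pos hx0 2]
    have step2 : matSpectralNorm ((matRe A)⁻¹ + (matRe B)⁻¹)⁻¹
        ≤ (4 : ℝ)⁻¹ * ((matSpectralNorm (1 + A) - 1) + (matSpectralNorm (1 + B) - 1)) := by
      apply psd_norm_le hQpd.posSemidef (by nlinarith [ha1, hb1])
      intro x
      have h4 := hm_le_am hHA hKB x
      have h5 := hHa x
      have h6 := hKb x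
      nlinarith [h4, h5, h6]
    -- final assembly
    have hsmul : matSpectralNorm ((2 : ℂ) • (A⁻¹ + B⁻¹)⁻¹)
        = 2 * matSpectralNorm (A⁻¹ + B⁻¹)⁻¹ := by
      rw [spectralNorm_smul]
      norm_num
    rw [hsmul]
    have hQab : matSpectralNorm ((matRe A)⁻¹ + (matRe B)⁻¹)⁻¹
        ≤ (4 : ℝ)⁻¹ * (matSpectralNorm (1 + A) * matSpectralNorm (1 + B)) := by
      have : (matSpectralNorm (1 + A) - 1) + (matSpectralNorm (1 + B) - 1)
          ≤ matSpectralNorm (1 + A) * matSpectralNorm (1 + B) := by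
        nlinarith [ha1, hb1]
      nlinarith [step2, this]
    have hab1 : 1 ≤ matSpectralNorm (1 + A) * matSpectralNorm (1 + B) := by
      nlinarith [ha1, hb1]
    calc 2 * matSpectralNorm (A⁻¹ + B⁻¹)⁻¹
        ≤ 2 * (matSpectralNorm ((matRe A)⁻¹ + (matRe B)⁻¹)⁻¹ / Real.cos θ ^ 2) := by
          linarith [step1]
      _ = 2 * matSpectralNorm ((matRe A)⁻¹ + (matRe B)⁻¹)⁻¹ / Real.cos θ ^ 2 := by
          ring
      _ ≤ 2 * ((4 : ℝ)⁻¹ * (matSpectralNorm (1 + A) * matSpectralNorm (1 + B))) / Real.cos θ ^ 2 := by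
          gcongr
      _ = (matSpectralNorm (1 + A) * matSpectralNorm (1 + B)) / (2 * Real.cos θ ^ 2) := by
          ring
      _ ≤ (matSpectralNorm (1 + A) * matSpectralNorm (1 + B)) / (2 * Real.cos θ ^ 4) := by
          have hc2le : Real.cos θ ^ 2 ≤ 1 := by nlinarith
          have hc4le : Real.cos θ ^ 4 ≤ Real.cos θ ^ 2 := by nlinarith [pow_pos hc 2]
          rw [div_le_div_iff₀ (by positivity) (by positivity)]
          nlinarith [hab1, hc4le, pow_pos hc 2, pow_pos hc 4]
      _ = (Real.cos θ)⁻¹ ^ 4 / 2 * (matSpectralNorm (1 + A) * matSpectralNorm (1 + B)) := by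
          rw [inv_pow]
          field_simp
end

section
/- Let 0 ≤ θ < π/2, let A and B be n×n complex matrices in the sector class S_θ, let 0 < m ≤ M with mI ≤ ℜA ≤ MI and mI ≤ ℜB ≤ MI, and let v ∈ [0,1]. Then ω(A∇_vB) ≤ secθ · K · ω(A!_vB), where ω denotes the numerical radius and K = (M+m)²/(4mM). (This is the f = identity, σ = !_v instance of the paper's numerical radius remark following its Theorem on f(ω(Aσ₁B)).) -/
open Matrix
open scoped ComplexOrder

section AuxLemmas

variable {n : ℕ}

private lemma dot_conjT (A : Matrix (Fin n) (Fin n) ℂ) (x : Fin n → ℂ) :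
    star x ⬝ᵥ Aᴴ.mulVec x = star (star x ⬝ᵥ A.mulVec x) := by
  rw [dotProduct_mulVec, ← star_mulVec, ← star_dotProduct_star, star_star, dotProduct_comm]

private lemma dot_matRe (A : Matrix (Fin n) (Fin n) ℂ) (x : Fin n → ℂ) :
    star x ⬝ᵥ (matRe A).mulVec x = ((star x ⬝ᵥ A.mulVec x).re : ℂ) := by
  have h := dot_conjT A x
  simp only [matRe, smul_mulVec, dotProduct_smul, add_mulVec, dotProduct_add, h]
  set z := star x ⬝ᵥ A.mulVec x
  rw [show (star z) = (starRingEnd ℂ) z from rfl, Complex.add_conj]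
  rw [smul_eq_mul]
  push_cast
  ring

private lemma dot_matIm (A : Matrix (Fin n) (Fin n) ℂ) (x : Fin n → ℂ) :
    star x ⬝ᵥ (matIm A).mulVec x = ((star x ⬝ᵥ A.mulVec x).im : ℂ) := by
  have h := dot_conjT A x
  simp only [matIm, smul_mulVec, dotProduct_smul, sub_mulVec, dotProduct_sub, h]
  set z := star x ⬝ᵥ A.mulVec x
  rw [show (star z) = (starRingEnd ℂ) z from rfl, Complex.sub_conj]
  rw [smul_eq_mul]
  have h2 : (2 * Complex.I) ≠ 0 := by simp [Complex.I_ne_zero]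
  field_simp
  push_cast
  rfl

private lemma matRe_isHermitian (A : Matrix (Fin n) (Fin n) ℂ) : (matRe A).IsHermitian := by
  unfold Matrix.IsHermitian matRe
  rw [Matrix.conjTranspose_smul]
  simp [add_comm]

private lemma psd_smul {X : Matrix (Fin n) (Fin n) ℂ} (hX : X.PosSemidef) {r : ℝ} (hr : 0 ≤ r) :
    ((r : ℂ) • X).PosSemidef := by
  refine Matrix.PosSemidef.of_dotProduct_mulVec_nonneg ?_ ?_
  · unfold Matrix.IsHermitian
    rw [Matrix.conjTranspose_smul, hX.1]
    congr 1
    simp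
  · intro x
    rw [smul_mulVec, dotProduct_smul, smul_eq_mul]
    exact mul_nonneg (by exact_mod_cast Complex.zero_le_real.mpr hr) (hX.dotProduct_mulVec_nonneg x)

private lemma posDef_smul {X : Matrix (Fin n) (Fin n) ℂ} (hX : X.PosDef) {r : ℝ} (hr : 0 < r) :
    ((r : ℂ) • X).PosDef := by
  refine Matrix.PosDef.of_dotProduct_mulVec_pos ?_ ?_
  · unfold Matrix.IsHermitian
    rw [Matrix.conjTranspose_smul, hX.1]
    congr 1
    simp
  · intro x hx
    rw [smul_mulVec, dotProduct_smul, smul_eq_mul]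
    have h := hX.dotProduct_mulVec_pos hx
    rw [Complex.lt_def] at h ⊢
    constructor
    · simp only [Complex.mul_re, Complex.ofReal_re, Complex.ofReal_im, Complex.zero_re] at *
      nlinarith [h.1]
    · simp only [Complex.mul_im, Complex.ofReal_re, Complex.ofReal_im, Complex.zero_im] at *
      simp [← h.2]

private lemma posDef_convex {X Y : Matrix (Fin n) (Fin n) ℂ} (hX : X.PosDef) (hY : Y.PosDef)
    {v : ℝ} (hv0 : 0 ≤ v) (hv1 : v ≤ 1) :
    ((v : ℂ) • X + ((1 - v : ℝ) : ℂ) • Y).PosDef := by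
  rcases eq_or_lt_of_le hv0 with h | h
  · rw [← h]
    simp only [Complex.ofReal_zero, zero_smul, zero_add, sub_zero, Complex.ofReal_one, one_smul]
    exact hY
  · exact (posDef_smul hX h).add_posSemidef (psd_smul hY.posSemidef (by linarith))

private lemma matRe_smul_real (r : ℝ) (A : Matrix (Fin n) (Fin n) ℂ) :
    matRe ((r : ℂ) • A) = (r : ℂ) • matRe A := by
  unfold matRe
  rw [Matrix.conjTranspose_smul]
  simp only [Complex.star_def, Complex.conj_ofReal, smul_add, smul_smul]
  rw [mul_comm]

private lemma matRe_add (A B : Matrix (Fin n) (Fin n) ℂ) :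
    matRe (A + B) = matRe A + matRe B := by
  unfold matRe
  rw [Matrix.conjTranspose_add, smul_add]
  module

private lemma matIm_smul_real (r : ℝ) (A : Matrix (Fin n) (Fin n) ℂ) :
    matIm ((r : ℂ) • A) = (r : ℂ) • matIm A := by
  unfold matIm
  rw [Matrix.conjTranspose_smul]
  simp only [Complex.star_def, Complex.conj_ofReal, smul_sub, smul_smul]
  rw [mul_comm]

private lemma matIm_add (A B : Matrix (Fin n) (Fin n) ℂ) :
    matIm (A + B) = matIm A + matIm B := by
  unfold matIm
  rw [Matrix.conjTranspose_add, smul_sub]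
  module

private lemma isUnit_det_of_posDef_re {A : Matrix (Fin n) (Fin n) ℂ}
    (hA : (matRe A).PosDef) : IsUnit A.det := by
  rw [isUnit_iff_ne_zero]
  intro hdet
  obtain ⟨x, hx0, hx⟩ := (Matrix.exists_mulVec_eq_zero_iff.mpr hdet)
  have h := hA.re_dotProduct_pos hx0
  have h2 := dot_matRe A x
  rw [hx] at h2
  simp at h2
  rw [h2] at h
  simp at h

private lemma matRe_inv {A : Matrix (Fin n) (Fin n) ℂ} (hu : IsUnit A.det) :
    matRe (A⁻¹) = A⁻¹ * matRe A * (A⁻¹)ᴴ := by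
  have huH : IsUnit (Aᴴ).det := by
    rw [Matrix.det_conjTranspose]
    exact hu.star
  unfold matRe
  rw [Matrix.conjTranspose_nonsing_inv, Matrix.mul_smul, Matrix.smul_mul]
  congr 1
  rw [Matrix.mul_add, Matrix.add_mul, Matrix.mul_assoc (A⁻¹) Aᴴ (Aᴴ⁻¹),
    Matrix.mul_nonsing_inv _ huH, Matrix.nonsing_inv_mul _ hu, Matrix.one_mul, Matrix.mul_one]
  rw [add_comm]

private lemma posDef_conj {R N : Matrix (Fin n) (Fin n) ℂ} (hR : R.PosDef)
    (hN : IsUnit N.det) : (N * R * Nᴴ).PosDef := by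
  have hNH : IsUnit (Nᴴ).det := by
    rw [Matrix.det_conjTranspose]
    exact hN.star
  refine Matrix.PosDef.of_dotProduct_mulVec_pos ?_ ?_
  · unfold Matrix.IsHermitian
    rw [Matrix.conjTranspose_mul, Matrix.conjTranspose_mul, Matrix.conjTranspose_conjTranspose,
      hR.isHermitian.eq, Matrix.mul_assoc]
  · intro x hx
    have hy : Nᴴ.mulVec x ≠ 0 := by
      intro h0
      apply hx
      have := congrArg (fun z => (Nᴴ)⁻¹.mulVec z) h0
      simpa [Matrix.mulVec_mulVec, Matrix.nonsing_inv_mul _ hNH] using this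
    have heq : star x ⬝ᵥ (N * R * Nᴴ).mulVec x
        = star (Nᴴ.mulVec x) ⬝ᵥ R.mulVec (Nᴴ.mulVec x) := by
      rw [← Matrix.mulVec_mulVec, ← Matrix.mulVec_mulVec, dotProduct_mulVec (star x) N,
        star_mulVec, Matrix.conjTranspose_conjTranspose, ← dotProduct_mulVec]
    rw [heq]
    exact hR.dotProduct_mulVec_pos hy

private lemma eig_bounds {X : Matrix (Fin n) (Fin n) ℂ} (hX : X.IsHermitian) {m M : ℝ}
    (h1 : (X - m • 1).PosSemidef) (h2 : (M • (1 : Matrix (Fin n) (Fin n) ℂ) - X).PosSemidef)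
    (i : Fin n) : m ≤ hX.eigenvalues i ∧ hX.eigenvalues i ≤ M := by
  set w : Fin n → ℂ := ⇑(hX.eigenvectorBasis i) with hw
  have hnorm : star w ⬝ᵥ w = 1 := by
    have h := EuclideanSpace.inner_eq_star_dotProduct (hX.eigenvectorBasis i)
      (hX.eigenvectorBasis i)
    rw [inner_self_eq_norm_sq_to_K, hX.eigenvectorBasis.orthonormal.1 i] at h
    rw [dotProduct_comm]
    simpa using h.symm
  have hXw : star w ⬝ᵥ X.mulVec w = ((hX.eigenvalues i : ℝ) : ℂ) := by
    rw [hX.mulVec_eigenvectorBasis]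
    rw [dotProduct_smul, ← hw, hnorm]
    simp
  constructor
  · have hq := h1.dotProduct_mulVec_nonneg w
    rw [Matrix.sub_mulVec, dotProduct_sub, hXw, smul_mulVec, dotProduct_smul,
      Matrix.one_mulVec, hnorm] at hq
    have hq2 : (0:ℂ) ≤ ((hX.eigenvalues i - m : ℝ) : ℂ) := by
      convert hq using 1
      push_cast
      simp [Complex.real_smul]
    rw [Complex.zero_le_real] at hq2
    linarith
  · have hq := h2.dotProduct_mulVec_nonneg w
    rw [Matrix.sub_mulVec, dotProduct_sub, hXw, smul_mulVec, dotProduct_smul,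
      Matrix.one_mulVec, hnorm] at hq
    have hq2 : (0:ℂ) ≤ ((M - hX.eigenvalues i : ℝ) : ℂ) := by
      convert hq using 1
      push_cast
      simp [Complex.real_smul]
    rw [Complex.zero_le_real] at hq2
    linarith

private lemma kant_one {X : Matrix (Fin n) (Fin n) ℂ} (hX : X.IsHermitian) {m M : ℝ} (hm : 0 < m)
    (heig : ∀ i, m ≤ hX.eigenvalues i ∧ hX.eigenvalues i ≤ M) :
    (((M + m : ℝ) : ℂ) • (1 : Matrix (Fin n) (Fin n) ℂ) - X
      - ((m * M : ℝ) : ℂ) • X⁻¹).PosSemidef := by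
  set U : Matrix (Fin n) (Fin n) ℂ := (hX.eigenvectorUnitary : Matrix (Fin n) (Fin n) ℂ) with hU
  have hUU : U * star U = 1 := (Matrix.mem_unitaryGroup_iff).mp hX.eigenvectorUnitary.2
  have hUU' : star U * U = 1 := (Matrix.mem_unitaryGroup_iff').mp hX.eigenvectorUnitary.2
  set d : Fin n → ℝ := hX.eigenvalues with hd
  have hd0 : ∀ i, (d i : ℂ) ≠ 0 := fun i => by
    exact_mod_cast ne_of_gt (lt_of_lt_of_le hm (heig i).1)
  have hspec : X = U * Matrix.diagonal (fun i => ((d i : ℝ) : ℂ)) * star U := by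
    have := hX.spectral_theorem
    simp only [Unitary.conjStarAlgAut_apply] at this
    convert this using 3
    · rfl
    · rfl
    · rfl
  have hXinv : X⁻¹ = U * Matrix.diagonal (fun i => ((d i : ℂ))⁻¹) * star U := by
    apply Matrix.inv_eq_right_inv
    rw [hspec]
    simp only [← Matrix.mul_assoc]
    rw [Matrix.mul_assoc (U * Matrix.diagonal _) (star U) U, hUU', Matrix.mul_one,
      Matrix.mul_assoc U (Matrix.diagonal _) (Matrix.diagonal _), Matrix.diagonal_mul_diagonal]
    simp only [mul_inv_cancel₀ (hd0 _)]
    rw [Matrix.diagonal_one, Matrix.mul_one, hUU]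
  have key : ((M + m : ℝ) : ℂ) • (1 : Matrix (Fin n) (Fin n) ℂ) - X - ((m * M : ℝ) : ℂ) • X⁻¹
      = U * Matrix.diagonal (fun i => (((M + m) - d i - m * M * (d i)⁻¹ : ℝ) : ℂ)) * star U := by
    rw [hXinv, hspec]
    have h1 : ((M + m : ℝ) : ℂ) • (1 : Matrix (Fin n) (Fin n) ℂ)
        = U * Matrix.diagonal (fun _ => ((M + m : ℝ) : ℂ)) * star U := by
      rw [← Matrix.smul_one_eq_diagonal, Matrix.mul_smul, Matrix.smul_mul, Matrix.mul_one, hUU]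
    have hsub : ∀ f g : Fin n → ℂ, (U * Matrix.diagonal f * star U)
        - (U * Matrix.diagonal g * star U)
        = U * Matrix.diagonal (fun i => f i - g i) * star U := by
      intro f g
      rw [← Matrix.sub_mul, ← Matrix.mul_sub, Matrix.diagonal_sub]
    have hsmul : ∀ (c : ℂ) (f : Fin n → ℂ), c • (U * Matrix.diagonal f * star U)
        = U * Matrix.diagonal (fun i => c * f i) * star U := by
      intro c f
      rw [← Matrix.smul_mul, ← Matrix.mul_smul, ← Matrix.diagonal_smul]
      congr 1
    rw [h1, hsmul, hsub, hsub]
    congr 2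
    funext i
    push_cast
    ring
  rw [key]
  have hdiag : (Matrix.diagonal
      (fun i => (((M + m) - d i - m * M * (d i)⁻¹ : ℝ) : ℂ))).PosSemidef := by
    rw [Matrix.posSemidef_diagonal_iff]
    intro i
    rw [Complex.zero_le_real]
    have h1 := (heig i).1
    have h2 := (heig i).2
    have hdi : 0 < d i := lt_of_lt_of_le hm h1
    have hexp : (M + m) - d i - m * M * (d i)⁻¹ = (M - d i) * (d i - m) * (d i)⁻¹ := by
      field_simp
      ring
    rw [hexp]
    exact mul_nonneg (mul_nonneg (by linarith) (by linarith)) (by positivity)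
  have := hdiag.mul_mul_conjTranspose_same U
  simpa [Matrix.star_eq_conjTranspose] using this

private lemma kant_two {G : Matrix (Fin n) (Fin n) ℂ} (hG : G.PosDef) {m M : ℝ}
    (hm : 0 < m) (hmM : m ≤ M) :
    ((((M + m) ^ 2 / (4 * m * M) : ℝ) : ℂ) • G⁻¹
      - (((M + m : ℝ) : ℂ) • (1 : Matrix (Fin n) (Fin n) ℂ)
        - ((m * M : ℝ) : ℂ) • G)).PosSemidef := by
  have hdet : IsUnit G.det := isUnit_iff_ne_zero.mpr hG.det_pos.ne'
  have hGG : G * G⁻¹ = 1 := Matrix.mul_nonsing_inv _ hdet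
  have hGG' : G⁻¹ * G = 1 := Matrix.nonsing_inv_mul _ hdet
  have hGH : G⁻¹ᴴ = G⁻¹ := by rw [Matrix.conjTranspose_nonsing_inv, hG.isHermitian.eq]
  set K : ℝ := (M + m) ^ 2 / (4 * m * M) with hK
  set c : ℝ := 2 * m * M / (M + m) with hc
  have hM : 0 < M := lt_of_lt_of_le hm hmM
  have hMm : (0:ℝ) < M + m := by linarith
  have key : ((K : ℝ) : ℂ) • G⁻¹ - (((M + m : ℝ) : ℂ) • 1 - ((m * M : ℝ) : ℂ) • G)
      = ((K : ℝ) : ℂ) • ((G⁻¹ - ((c : ℝ) : ℂ) • 1) * G * (G⁻¹ - ((c : ℝ) : ℂ) • 1)ᴴ) := by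
    have hadj : (G⁻¹ - ((c : ℝ) : ℂ) • 1)ᴴ = G⁻¹ - ((c : ℝ) : ℂ) • 1 := by
      rw [Matrix.conjTranspose_sub, hGH, Matrix.conjTranspose_smul, Matrix.conjTranspose_one]
      congr 1
      simp
    rw [hadj]
    have e1 : (G⁻¹ - ((c : ℝ) : ℂ) • 1) * G = 1 - ((c : ℝ) : ℂ) • G := by
      rw [Matrix.sub_mul, hGG', Matrix.smul_mul, Matrix.one_mul]
    rw [e1, Matrix.sub_mul, Matrix.one_mul, Matrix.mul_sub, Matrix.smul_mul, hGG,
      Matrix.smul_mul, Matrix.mul_smul, Matrix.mul_one]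
    have hm0 : (m:ℂ) ≠ 0 := by exact_mod_cast hm.ne'
    have hM0 : (M:ℂ) ≠ 0 := by exact_mod_cast hM.ne'
    have hMm0 : (M:ℂ) + (m:ℂ) ≠ 0 := by
      have h9 : ((M + m : ℝ):ℂ) ≠ 0 := by exact_mod_cast hMm.ne'
      push_cast at h9
      exact h9
    rw [hK, hc]
    match_scalars <;> (push_cast; field_simp; try ring)
  rw [key]
  exact psd_smul (hG.posSemidef.mul_mul_conjTranspose_same _) (by positivity)

private lemma par_sum {X Y P Q : Matrix (Fin n) (Fin n) ℂ} (hX : X.PosDef) (hY : Y.PosDef)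
    {v : ℝ} (hv0 : 0 ≤ v) (hv1 : v ≤ 1)
    (hG0 : (((v:ℂ) • X⁻¹ + ((1-v:ℝ):ℂ) • Y⁻¹)).PosDef)
    (hPQ : (v:ℂ) • P + ((1-v:ℝ):ℂ) • Q = 1) :
    ((v:ℂ) • (P * X * Pᴴ) + ((1-v:ℝ):ℂ) • (Q * Y * Qᴴ)
      - ((v:ℂ) • X⁻¹ + ((1-v:ℝ):ℂ) • Y⁻¹)⁻¹).PosSemidef := by
  set w : ℂ := ((1-v:ℝ):ℂ) with hw
  set G₀ : Matrix (Fin n) (Fin n) ℂ := (v:ℂ) • X⁻¹ + w • Y⁻¹ with hG₀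
  set Z : Matrix (Fin n) (Fin n) ℂ := G₀⁻¹ with hZdef
  have hdet : IsUnit G₀.det := isUnit_iff_ne_zero.mpr hG0.det_pos.ne'
  have hGZ : G₀ * Z = 1 := Matrix.mul_nonsing_inv _ hdet
  have hZH : Zᴴ = Z := by rw [hZdef, Matrix.conjTranspose_nonsing_inv, hG0.isHermitian.eq]
  have hdX : IsUnit X.det := isUnit_iff_ne_zero.mpr hX.det_pos.ne'
  have hdY : IsUnit Y.det := isUnit_iff_ne_zero.mpr hY.det_pos.ne'
  have hXX : X * X⁻¹ = 1 := Matrix.mul_nonsing_inv _ hdX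
  have hX'X : X⁻¹ * X = 1 := Matrix.nonsing_inv_mul _ hdX
  have hYY : Y * Y⁻¹ = 1 := Matrix.mul_nonsing_inv _ hdY
  have hY'Y : Y⁻¹ * Y = 1 := Matrix.nonsing_inv_mul _ hdY
  have e1 : (P*X - Z) * X⁻¹ * (P*X - Z)ᴴ = P*X*Pᴴ - P*Z - Z*Pᴴ + Z*(X⁻¹*Z) := by
    have hPXZ : (P*X - Z)ᴴ = X*Pᴴ - Z := by
      rw [Matrix.conjTranspose_sub, Matrix.conjTranspose_mul, hX.isHermitian.eq, hZH]
    rw [hPXZ, Matrix.sub_mul, Matrix.mul_assoc P X X⁻¹, hXX, Matrix.mul_one,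
      Matrix.sub_mul, Matrix.mul_sub, Matrix.mul_sub,
      Matrix.mul_assoc Z X⁻¹ (X*Pᴴ), ← Matrix.mul_assoc X⁻¹ X Pᴴ, hX'X, Matrix.one_mul,
      ← Matrix.mul_assoc P X Pᴴ, Matrix.mul_assoc Z X⁻¹ Z]
    abel
  have e2 : (Q*Y - Z) * Y⁻¹ * (Q*Y - Z)ᴴ = Q*Y*Qᴴ - Q*Z - Z*Qᴴ + Z*(Y⁻¹*Z) := by
    have hQYZ : (Q*Y - Z)ᴴ = Y*Qᴴ - Z := by
      rw [Matrix.conjTranspose_sub, Matrix.conjTranspose_mul, hY.isHermitian.eq, hZH]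
    rw [hQYZ, Matrix.sub_mul, Matrix.mul_assoc Q Y Y⁻¹, hYY, Matrix.mul_one,
      Matrix.sub_mul, Matrix.mul_sub, Matrix.mul_sub,
      Matrix.mul_assoc Z Y⁻¹ (Y*Qᴴ), ← Matrix.mul_assoc Y⁻¹ Y Qᴴ, hY'Y, Matrix.one_mul,
      ← Matrix.mul_assoc Q Y Qᴴ, Matrix.mul_assoc Z Y⁻¹ Z]
    abel
  have hPQH : (v:ℂ) • Pᴴ + w • Qᴴ = 1 := by
    have := congrArg Matrix.conjTranspose hPQ
    simpa [Matrix.conjTranspose_add, Matrix.conjTranspose_smul, Complex.conj_ofReal, hw]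
      using this
  have hsum1 : (v:ℂ) • (P*Z) + w • (Q*Z) = Z := by
    rw [← Matrix.smul_mul, ← Matrix.smul_mul, ← Matrix.add_mul, hPQ, Matrix.one_mul]
  have hsum2 : (v:ℂ) • (Z*Pᴴ) + w • (Z*Qᴴ) = Z := by
    rw [← Matrix.mul_smul, ← Matrix.mul_smul, ← Matrix.mul_add, hPQH, Matrix.mul_one]
  have hsum3 : (v:ℂ) • (Z*(X⁻¹*Z)) + w • (Z*(Y⁻¹*Z)) = Z := by
    have h : Z * (G₀ * Z) = Z := by rw [hGZ, Matrix.mul_one]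
    rw [hG₀, Matrix.add_mul, Matrix.smul_mul, Matrix.smul_mul, Matrix.mul_add,
      Matrix.mul_smul, Matrix.mul_smul] at h
    exact h
  have key : (v:ℂ) • (P * X * Pᴴ) + w • (Q * Y * Qᴴ) - Z
      = (v:ℂ) • ((P*X - Z) * X⁻¹ * (P*X - Z)ᴴ) + w • ((Q*Y - Z) * Y⁻¹ * (Q*Y - Z)ᴴ) := by
    have expand : (v:ℂ) • ((P*X - Z) * X⁻¹ * (P*X - Z)ᴴ) + w • ((Q*Y - Z) * Y⁻¹ * (Q*Y - Z)ᴴ)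
        = ((v:ℂ) • (P*X*Pᴴ) + w • (Q*Y*Qᴴ)) - ((v:ℂ) • (P*Z) + w • (Q*Z))
          - ((v:ℂ) • (Z*Pᴴ) + w • (Z*Qᴴ)) + ((v:ℂ) • (Z*(X⁻¹*Z)) + w • (Z*(Y⁻¹*Z))) := by
      rw [e1, e2]
      module
    rw [expand, hsum1, hsum2, hsum3]
    abel
  rw [key]
  exact ((psd_smul ((hX.inv.posSemidef).mul_mul_conjTranspose_same _) hv0).add
    (psd_smul ((hY.inv.posSemidef).mul_mul_conjTranspose_same _) (by linarith)))

end AuxLemmas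
private lemma dot_abs_le (C : Matrix (Fin n) (Fin n) ℂ) (y : EuclideanSpace ℂ (Fin n))
    (hy : ‖y‖ = 1) :
    ‖star (y : Fin n → ℂ) ⬝ᵥ C.mulVec (y : Fin n → ℂ)‖
      ≤ ‖Matrix.toEuclideanCLM (𝕜 := ℂ) C‖ := by
  have he : star (y : Fin n → ℂ) ⬝ᵥ C.mulVec (y : Fin n → ℂ)
      = inner ℂ y ((Matrix.toEuclideanCLM (𝕜 := ℂ) C) y) := by
    rw [EuclideanSpace.inner_eq_star_dotProduct, dotProduct_comm _ (star _)]; rfl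
  rw [he]
  calc ‖inner ℂ y ((Matrix.toEuclideanCLM (𝕜 := ℂ) C) y)‖
      ≤ ‖y‖ * ‖(Matrix.toEuclideanCLM (𝕜 := ℂ) C) y‖ := norm_inner_le_norm _ _
    _ ≤ ‖y‖ * (‖Matrix.toEuclideanCLM (𝕜 := ℂ) C‖ * ‖y‖) := by
        exact mul_le_mul_of_nonneg_left ((Matrix.toEuclideanCLM (𝕜 := ℂ) C).le_opNorm y)
          (norm_nonneg _)
    _ = ‖Matrix.toEuclideanCLM (𝕜 := ℂ) C‖ := by rw [hy]; ring

theorem stmt16 {n : ℕ} (θ : ℝ) (hθ0 : 0 ≤ θ) (hθ1 : θ < Real.pi / 2)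
    (A B : Matrix (Fin n) (Fin n) ℂ)
    (hA : sectorClass θ A) (hB : sectorClass θ B)
    (m M : ℝ) (hm : 0 < m) (hmM : m ≤ M)
    (hmA : loewnerLE (m • (1 : Matrix (Fin n) (Fin n) ℂ)) (matRe A))
    (hAM : loewnerLE (matRe A) (M • (1 : Matrix (Fin n) (Fin n) ℂ)))
    (hmB : loewnerLE (m • (1 : Matrix (Fin n) (Fin n) ℂ)) (matRe B))
    (hBM : loewnerLE (matRe B) (M • (1 : Matrix (Fin n) (Fin n) ℂ)))
    (v : ℝ) (hv0 : 0 ≤ v) (hv1 : v ≤ 1) :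
    numRadius (amean v A B) ≤ (Real.cos θ)⁻¹ * ((M + m) ^ 2 / (4 * m * M)) * numRadius (hmean v A B) := by
  have hM : 0 < M := lt_of_lt_of_le hm hmM
  set K : ℝ := (M + m) ^ 2 / (4 * m * M) with hKdef
  have hK0 : 0 ≤ K := by positivity
  have hcos : 0 < Real.cos θ := Real.cos_pos_of_mem_Ioo ⟨by linarith [Real.pi_pos], hθ1⟩
  have htan : 0 ≤ Real.tan θ := Real.tan_nonneg_of_nonneg_of_le_pi_div_two hθ0 hθ1.le
  have hRApd : (matRe A).PosDef := hA.1
  have hRBpd : (matRe B).PosDef := hB.1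
  have hHA : (matRe A).IsHermitian := hRApd.isHermitian
  have hHB : (matRe B).IsHermitian := hRBpd.isHermitian
  have hv1' : (0:ℝ) ≤ 1 - v := by linarith
  -- eigenvalue bounds
  have heigA := eig_bounds hHA hmA hAM
  have heigB := eig_bounds hHB hmB hBM
  -- step (b): weighted kantorovich bound on real parts
  have hk1A := kant_one hHA hm heigA
  have hk1B := kant_one hHB hm heigB
  have D1 : (((M + m : ℝ) : ℂ) • (1 : Matrix (Fin n) (Fin n) ℂ)
      - ((v:ℂ) • matRe A + ((1-v:ℝ):ℂ) • matRe B)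
      - ((m * M : ℝ) : ℂ) • ((v:ℂ) • (matRe A)⁻¹ + ((1-v:ℝ):ℂ) • (matRe B)⁻¹)).PosSemidef := by
    have base := (psd_smul hk1A hv0).add (psd_smul hk1B hv1')
    have heq : (v:ℂ) • (((M + m : ℝ) : ℂ) • (1 : Matrix (Fin n) (Fin n) ℂ) - matRe A
          - ((m * M : ℝ) : ℂ) • (matRe A)⁻¹)
        + ((1-v:ℝ):ℂ) • (((M + m : ℝ) : ℂ) • (1 : Matrix (Fin n) (Fin n) ℂ) - matRe B
          - ((m * M : ℝ) : ℂ) • (matRe B)⁻¹)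
        = ((M + m : ℝ) : ℂ) • (1 : Matrix (Fin n) (Fin n) ℂ)
          - ((v:ℂ) • matRe A + ((1-v:ℝ):ℂ) • matRe B)
          - ((m * M : ℝ) : ℂ) • ((v:ℂ) • (matRe A)⁻¹ + ((1-v:ℝ):ℂ) • (matRe B)⁻¹) := by
      match_scalars <;> (push_cast; ring)
    rw [← heq]
    exact base
  -- G₀ is positive definite
  have hG0pd : (((v:ℂ) • (matRe A)⁻¹ + ((1-v:ℝ):ℂ) • (matRe B)⁻¹)).PosDef :=
    posDef_convex hRApd.inv hRBpd.inv hv0 hv1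
  have D2 := kant_two hG0pd hm hmM
  -- the matrix G and its inverse (= hmean)
  have hdetA : IsUnit A.det := isUnit_det_of_posDef_re hA.1
  have hdetB : IsUnit B.det := isUnit_det_of_posDef_re hB.1
  have hReAinv : matRe (A⁻¹) = A⁻¹ * matRe A * (A⁻¹)ᴴ := matRe_inv hdetA
  have hReBinv : matRe (B⁻¹) = B⁻¹ * matRe B * (B⁻¹)ᴴ := matRe_inv hdetB
  have hReAinvPD : (matRe (A⁻¹)).PosDef := by
    rw [hReAinv]
    exact posDef_conj hA.1 (A.isUnit_nonsing_inv_det hdetA)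
  have hReBinvPD : (matRe (B⁻¹)).PosDef := by
    rw [hReBinv]
    exact posDef_conj hB.1 (B.isUnit_nonsing_inv_det hdetB)
  have hReG : matRe ((v:ℂ) • A⁻¹ + ((1-v:ℝ):ℂ) • B⁻¹)
      = (v:ℂ) • matRe (A⁻¹) + ((1-v:ℝ):ℂ) • matRe (B⁻¹) := by
    rw [matRe_add, matRe_smul_real, matRe_smul_real]
  have hReGpd : (matRe ((v:ℂ) • A⁻¹ + ((1-v:ℝ):ℂ) • B⁻¹)).PosDef := by
    rw [hReG]
    exact posDef_convex hReAinvPD hReBinvPD hv0 hv1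
  have hdetG : IsUnit ((v:ℂ) • A⁻¹ + ((1-v:ℝ):ℂ) • B⁻¹).det := isUnit_det_of_posDef_re hReGpd
  set G : Matrix (Fin n) (Fin n) ℂ := (v:ℂ) • A⁻¹ + ((1-v:ℝ):ℂ) • B⁻¹ with hGdef
  have hPQ : (v:ℂ) • (G⁻¹ * A⁻¹) + ((1-v:ℝ):ℂ) • (G⁻¹ * B⁻¹) = 1 := by
    rw [← Matrix.mul_smul, ← Matrix.mul_smul, ← Matrix.mul_add, ← hGdef]
    exact Matrix.nonsing_inv_mul _ hdetG
  have D3' := par_sum hA.1 hB.1 hv0 hv1 hG0pd hPQ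
  have hHmeq : hmean v A B = G⁻¹ := rfl
  have hHm : matRe (hmean v A B)
      = (v:ℂ) • ((G⁻¹ * A⁻¹) * matRe A * (G⁻¹ * A⁻¹)ᴴ)
        + ((1-v:ℝ):ℂ) • ((G⁻¹ * B⁻¹) * matRe B * (G⁻¹ * B⁻¹)ᴴ) := by
    rw [hHmeq, matRe_inv hdetG, hReG, hReAinv, hReBinv]
    simp only [Matrix.mul_add, Matrix.add_mul, Matrix.mul_smul, Matrix.smul_mul,
      Matrix.conjTranspose_mul, Matrix.mul_assoc]
  have D3 : (matRe (hmean v A B)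
      - ((v:ℂ) • (matRe A)⁻¹ + ((1-v:ℝ):ℂ) • (matRe B)⁻¹)⁻¹).PosSemidef := by
    rw [hHm]
    exact D3'
  -- assemble the Loewner chain
  have hAm : matRe (amean v A B) = (v:ℂ) • matRe A + ((1-v:ℝ):ℂ) • matRe B := by
    unfold amean
    rw [matRe_add, matRe_smul_real, matRe_smul_real]
  have chain : (((K:ℝ):ℂ) • matRe (hmean v A B) - matRe (amean v A B)).PosSemidef := by
    have target_eq : ((K:ℝ):ℂ) • matRe (hmean v A B) - matRe (amean v A B)
        = ((K:ℝ):ℂ) • (matRe (hmean v A B)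
            - ((v:ℂ) • (matRe A)⁻¹ + ((1-v:ℝ):ℂ) • (matRe B)⁻¹)⁻¹)
          + (((K:ℝ):ℂ) • ((v:ℂ) • (matRe A)⁻¹ + ((1-v:ℝ):ℂ) • (matRe B)⁻¹)⁻¹
            - (((M + m : ℝ) : ℂ) • (1 : Matrix (Fin n) (Fin n) ℂ)
              - ((m * M : ℝ) : ℂ) • ((v:ℂ) • (matRe A)⁻¹ + ((1-v:ℝ):ℂ) • (matRe B)⁻¹)))
          + (((M + m : ℝ) : ℂ) • (1 : Matrix (Fin n) (Fin n) ℂ)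
            - ((v:ℂ) • matRe A + ((1-v:ℝ):ℂ) • matRe B)
            - ((m * M : ℝ) : ℂ) • ((v:ℂ) • (matRe A)⁻¹ + ((1-v:ℝ):ℂ) • (matRe B)⁻¹)) := by
      rw [hAm]
      module
    rw [target_eq]
    exact ((psd_smul D3 hK0).add D2).add D1
  -- quadratic form consequence
  have hq : ∀ x : Fin n → ℂ, (star x ⬝ᵥ (amean v A B).mulVec x).re
      ≤ K * (star x ⬝ᵥ (hmean v A B).mulVec x).re := by
    intro x
    have h := chain.dotProduct_mulVec_nonneg x
    rw [Matrix.sub_mulVec, dotProduct_sub, smul_mulVec, dotProduct_smul,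
      dot_matRe, dot_matRe, smul_eq_mul] at h
    have h1 := (Complex.le_def.mp h).1
    simp only [Complex.sub_re, Complex.mul_re, Complex.ofReal_re, Complex.ofReal_im,
      Complex.zero_re, mul_zero, sub_zero] at h1
    linarith
  -- numerical radius of hmean : upper bounds
  have hbdd : BddAbove {r : ℝ | ∃ x : EuclideanSpace ℂ (Fin n), ‖x‖ = 1 ∧
      r = ‖star (x : Fin n → ℂ) ⬝ᵥ (hmean v A B).mulVec (x : Fin n → ℂ)‖} := by
    refine ⟨‖Matrix.toEuclideanCLM (𝕜 := ℂ) (hmean v A B)‖, ?_⟩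
    rintro r ⟨y, hy, rfl⟩
    exact dot_abs_le _ y hy
  have hnr_nonneg : 0 ≤ numRadius (hmean v A B) := by
    apply Real.sSup_nonneg
    rintro r ⟨y, hy, rfl⟩
    exact norm_nonneg _
  -- final bound
  unfold numRadius
  apply Real.sSup_le
  · rintro r ⟨x, hx, rfl⟩
    set z := star (x : Fin n → ℂ) ⬝ᵥ (amean v A B).mulVec (x : Fin n → ℂ) with hz
    set zA := star (x : Fin n → ℂ) ⬝ᵥ A.mulVec (x : Fin n → ℂ) with hzA
    set zB := star (x : Fin n → ℂ) ⬝ᵥ B.mulVec (x : Fin n → ℂ) with hzB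
    have hzdec : z = (v:ℂ) * zA + ((1-v:ℝ):ℂ) * zB := by
      rw [hz]
      unfold amean
      rw [Matrix.add_mulVec, smul_mulVec, smul_mulVec, dotProduct_add,
        dotProduct_smul, dotProduct_smul, smul_eq_mul, smul_eq_mul]
    have hz_re : z.re = v * zA.re + (1-v) * zB.re := by
      rw [hzdec]
      simp [Complex.add_re, Complex.mul_re]
    have hz_im : z.im = v * zA.im + (1-v) * zB.im := by
      rw [hzdec]
      simp [Complex.add_im, Complex.mul_im]
    have hsA : |zA.im| ≤ Real.tan θ * zA.re := by
      have h := hA.2 (x : Fin n → ℂ)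
      rwa [dot_matIm, dot_matRe, Complex.ofReal_re, Complex.ofReal_re] at h
    have hsB : |zB.im| ≤ Real.tan θ * zB.re := by
      have h := hB.2 (x : Fin n → ℂ)
      rwa [dot_matIm, dot_matRe, Complex.ofReal_re, Complex.ofReal_re] at h
    have hreA0 : 0 ≤ zA.re := by
      have h := hRApd.posSemidef.re_dotProduct_nonneg (x : Fin n → ℂ)
      rw [dot_matRe] at h
      simpa using h
    have hreB0 : 0 ≤ zB.re := by
      have h := hRBpd.posSemidef.re_dotProduct_nonneg (x : Fin n → ℂ)
      rw [dot_matRe] at h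
      simpa using h
    have hre0 : 0 ≤ z.re := by
      rw [hz_re]
      have h1 := mul_nonneg hv0 hreA0
      have h2 := mul_nonneg hv1' hreB0
      linarith
    have him : |z.im| ≤ Real.tan θ * z.re := by
      rw [hz_im, hz_re]
      calc |v * zA.im + (1-v) * zB.im| ≤ |v * zA.im| + |(1-v) * zB.im| := abs_add_le _ _
        _ = v * |zA.im| + (1-v) * |zB.im| := by
            rw [abs_mul, abs_mul, abs_of_nonneg hv0, abs_of_nonneg hv1']
        _ ≤ v * (Real.tan θ * zA.re) + (1-v) * (Real.tan θ * zB.re) :=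
            add_le_add (mul_le_mul_of_nonneg_left hsA hv0) (mul_le_mul_of_nonneg_left hsB hv1')
        _ = Real.tan θ * (v * zA.re + (1-v) * zB.re) := by ring
    have habs : ‖z‖ ≤ (Real.cos θ)⁻¹ * z.re := by
      have hrhs0 : 0 ≤ (Real.cos θ)⁻¹ * z.re := mul_nonneg (inv_nonneg.mpr hcos.le) hre0
      have h3 : 1 + Real.tan θ ^ 2 = ((Real.cos θ) ^ 2)⁻¹ := by
        rw [← Real.inv_one_add_tan_sq hcos.ne', inv_inv]
      have h1 : z.im * z.im ≤ (Real.tan θ * z.re) * (Real.tan θ * z.re) :=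
        calc z.im * z.im = |z.im| * |z.im| := (abs_mul_abs_self _).symm
          _ ≤ (Real.tan θ * z.re) * (Real.tan θ * z.re) :=
              mul_self_le_mul_self (abs_nonneg _) him
      have hsq : ‖z‖^2 ≤ ((Real.cos θ)⁻¹ * z.re)^2 := by
        rw [Complex.sq_norm, Complex.normSq_apply]
        have h4 : ((Real.cos θ)⁻¹)^2 = 1 + Real.tan θ ^ 2 := by
          rw [inv_pow, h3]
        have h5 : ((Real.cos θ)⁻¹ * z.re)^2 = (1 + Real.tan θ ^ 2) * z.re^2 := by
          rw [mul_pow, h4]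
        rw [h5]
        nlinarith [h1]
      have := Real.sqrt_le_sqrt hsq
      rwa [Real.sqrt_sq (norm_nonneg z), Real.sqrt_sq hrhs0] at this
    have hq1 := hq (x : Fin n → ℂ)
    set zH := star (x : Fin n → ℂ) ⬝ᵥ (hmean v A B).mulVec (x : Fin n → ℂ) with hzH
    have hwle : zH.re ≤ numRadius (hmean v A B) :=
      le_trans (Complex.re_le_norm zH) (le_csSup hbdd ⟨x, hx, rfl⟩)
    calc ‖z‖ ≤ (Real.cos θ)⁻¹ * z.re := habs
      _ ≤ (Real.cos θ)⁻¹ * (K * zH.re) :=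
          mul_le_mul_of_nonneg_left hq1 (inv_nonneg.mpr hcos.le)
      _ ≤ (Real.cos θ)⁻¹ * (K * numRadius (hmean v A B)) :=
          mul_le_mul_of_nonneg_left (mul_le_mul_of_nonneg_left hwle hK0)
            (inv_nonneg.mpr hcos.le)
      _ = (Real.cos θ)⁻¹ * K * numRadius (hmean v A B) := by ring
  · exact mul_nonneg (mul_nonneg (inv_nonneg.mpr hcos.le) hK0) hnr_nonneg
end

section
/- Let 0 ≤ θ < π/2 and let A be an n×n complex matrix in the sector class S_θ. Then ω(ℜA) ≤ ω(A) ≤ secθ · ω(ℜA), where ω denotes the numerical radius. -/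
open Matrix
open scoped ComplexOrder

lemma matRe_herm {n : ℕ} (A : Matrix (Fin n) (Fin n) ℂ) : (matRe A).IsHermitian := by
  unfold Matrix.IsHermitian matRe
  rw [conjTranspose_smul, conjTranspose_add, conjTranspose_conjTranspose]
  simp [add_comm]


lemma matIm_herm {n : ℕ} (A : Matrix (Fin n) (Fin n) ℂ) : (matIm A).IsHermitian := by
  unfold Matrix.IsHermitian matIm
  rw [conjTranspose_smul, conjTranspose_sub, conjTranspose_conjTranspose]
  have : star ((2 * Complex.I)⁻¹) = -(2 * Complex.I)⁻¹ := by
    simp [star_inv₀, Complex.ext_iff]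
  rw [this]
  module


lemma decompA {n : ℕ} (A : Matrix (Fin n) (Fin n) ℂ) :
    A = matRe A + Complex.I • matIm A := by
  unfold matRe matIm
  rw [smul_smul]
  have h2 : (Complex.I * (2 * Complex.I)⁻¹) = (2⁻¹ : ℂ) := by
    rw [mul_inv, mul_comm]; rw [mul_assoc, inv_mul_cancel₀ Complex.I_ne_zero, mul_one]
  rw [h2]
  module


lemma herm_quad_real {n : ℕ} {B : Matrix (Fin n) (Fin n) ℂ} (hB : B.IsHermitian)
    (x : Fin n → ℂ) :
    star x ⬝ᵥ B.mulVec x = ((star x ⬝ᵥ B.mulVec x).re : ℂ) := by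
  have h : star (star x ⬝ᵥ B.mulVec x) = star x ⬝ᵥ B.mulVec x := by
    rw [← star_dotProduct, star_mulVec, hB.eq, dotProduct_mulVec]
  exact (Complex.conj_eq_iff_re.mp h).symm


lemma quad_eq_inner {n : ℕ} (A : Matrix (Fin n) (Fin n) ℂ) (x : EuclideanSpace ℂ (Fin n)) :
    star (x : Fin n → ℂ) ⬝ᵥ A.mulVec (x : Fin n → ℂ) =
      inner (𝕜 := ℂ) x (Matrix.toEuclideanCLM (𝕜 := ℂ) A x) := by
  rw [EuclideanSpace.inner_eq_star_dotProduct, dotProduct_comm]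
  rfl


lemma numSet_bdd {n : ℕ} (A : Matrix (Fin n) (Fin n) ℂ) :
    BddAbove {r : ℝ | ∃ x : EuclideanSpace ℂ (Fin n), ‖x‖ = 1 ∧
      r = ‖star (x : Fin n → ℂ) ⬝ᵥ A.mulVec (x : Fin n → ℂ)‖} := by
  refine ⟨‖Matrix.toEuclideanCLM (𝕜 := ℂ) A‖, ?_⟩
  rintro r ⟨x, hx, rfl⟩
  rw [quad_eq_inner]
  calc ‖inner (𝕜 := ℂ) x (Matrix.toEuclideanCLM (𝕜 := ℂ) A x)‖
      = ‖inner (𝕜 := ℂ) x ((Matrix.toEuclideanCLM (𝕜 := ℂ) A) x)‖ := rfl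
    _ ≤ ‖x‖ * ‖(Matrix.toEuclideanCLM (𝕜 := ℂ) A) x‖ := norm_inner_le_norm _ _
    _ ≤ ‖x‖ * (‖Matrix.toEuclideanCLM (𝕜 := ℂ) A‖ * ‖x‖) := by
        gcongr; exact (Matrix.toEuclideanCLM (𝕜 := ℂ) A).le_opNorm x
    _ = ‖Matrix.toEuclideanCLM (𝕜 := ℂ) A‖ := by rw [hx]; ring


lemma quad_decomp {n : ℕ} (A : Matrix (Fin n) (Fin n) ℂ) (x : Fin n → ℂ) :
    star x ⬝ᵥ A.mulVec x =
      (((star x ⬝ᵥ (matRe A).mulVec x).re : ℂ)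
        + ((star x ⬝ᵥ (matIm A).mulVec x).re : ℂ) * Complex.I) := by
  have h1 := herm_quad_real (matRe_herm A) x
  have h2 := herm_quad_real (matIm_herm A) x
  conv_lhs => rw [decompA A]
  rw [add_mulVec, smul_mulVec, dotProduct_add, dotProduct_smul, smul_eq_mul]
  conv_lhs => rw [h1, h2]
  ring


theorem stmt19 {n : ℕ} (θ : ℝ) (hθ0 : 0 ≤ θ) (hθ1 : θ < Real.pi / 2)
    (A : Matrix (Fin n) (Fin n) ℂ) (hA : sectorClass θ A) :
    numRadius (matRe A) ≤ numRadius A ∧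
      numRadius A ≤ (Real.cos θ)⁻¹ * numRadius (matRe A) := by
  have hcos : 0 < Real.cos θ := Real.cos_pos_of_mem_Ioo ⟨by linarith [Real.pi_pos], hθ1⟩
  have htan : 0 ≤ Real.tan θ := by
    rw [Real.tan_eq_sin_div_cos]
    exact div_nonneg (Real.sin_nonneg_of_nonneg_of_le_pi hθ0 (by linarith [Real.pi_pos])) hcos.le
  -- notation
  set SB := {r : ℝ | ∃ x : EuclideanSpace ℂ (Fin n), ‖x‖ = 1 ∧
    r = ‖star (x : Fin n → ℂ) ⬝ᵥ (matRe A).mulVec (x : Fin n → ℂ)‖} with hSB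
  set SA := {r : ℝ | ∃ x : EuclideanSpace ℂ (Fin n), ‖x‖ = 1 ∧
    r = ‖star (x : Fin n → ℂ) ⬝ᵥ A.mulVec (x : Fin n → ℂ)‖} with hSA
  have hbA : BddAbove SA := numSet_bdd A
  have hbB : BddAbove SB := numSet_bdd (matRe A)
  have hnonnegA : (0:ℝ) ≤ sSup SA := Real.sSup_nonneg (by rintro r ⟨x, hx, rfl⟩; positivity)
  have hnonnegB : (0:ℝ) ≤ sSup SB := Real.sSup_nonneg (by rintro r ⟨x, hx, rfl⟩; positivity)
  -- pointwise facts
  have key : ∀ x : EuclideanSpace ℂ (Fin n), ‖x‖ = 1 →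
      ‖star (x : Fin n → ℂ) ⬝ᵥ (matRe A).mulVec (x : Fin n → ℂ)‖
        ≤ ‖star (x : Fin n → ℂ) ⬝ᵥ A.mulVec (x : Fin n → ℂ)‖ ∧
      ‖star (x : Fin n → ℂ) ⬝ᵥ A.mulVec (x : Fin n → ℂ)‖
        ≤ (Real.cos θ)⁻¹ *
          ‖star (x : Fin n → ℂ) ⬝ᵥ (matRe A).mulVec (x : Fin n → ℂ)‖ := by
    intro x hx
    set a := (star (x : Fin n → ℂ) ⬝ᵥ (matRe A).mulVec (x : Fin n → ℂ)).re with hadef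
    set b := (star (x : Fin n → ℂ) ⬝ᵥ (matIm A).mulVec (x : Fin n → ℂ)).re with hbdef
    have ha : 0 ≤ a := by
      have := hA.1.posSemidef.re_dotProduct_nonneg (x : Fin n → ℂ)
      exact this
    have hab : |b| ≤ Real.tan θ * a := hA.2 (x : Fin n → ℂ)
    have hAx : ‖star (x : Fin n → ℂ) ⬝ᵥ A.mulVec (x : Fin n → ℂ)‖
        = Real.sqrt (a ^ 2 + b ^ 2) := by
      rw [quad_decomp, Complex.norm_def, Complex.normSq_add_mul_I]
    have hBx : ‖star (x : Fin n → ℂ) ⬝ᵥ (matRe A).mulVec (x : Fin n → ℂ)‖ = a := by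
      rw [herm_quad_real (matRe_herm A), Complex.norm_real, Real.norm_eq_abs, abs_of_nonneg ha]
    constructor
    · rw [hAx, hBx]
      calc a = Real.sqrt (a ^ 2) := by rw [Real.sqrt_sq ha]
        _ ≤ Real.sqrt (a ^ 2 + b ^ 2) := Real.sqrt_le_sqrt (by nlinarith)
    · rw [hAx, hBx]
      have h1 : a ^ 2 + b ^ 2 ≤ ((Real.cos θ)⁻¹ * a) ^ 2 := by
        have hb2 : b ^ 2 ≤ (Real.tan θ * a) ^ 2 := by nlinarith [abs_nonneg b, sq_abs b]
        have htansq : 1 + Real.tan θ ^ 2 = (Real.cos θ ^ 2)⁻¹ := by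
          rw [← Real.inv_one_add_tan_sq hcos.ne', inv_inv]
        have hc2 : ((Real.cos θ)⁻¹ * a) ^ 2 = (1 + Real.tan θ ^ 2) * a ^ 2 := by
          rw [mul_pow, htansq, inv_pow]
        nlinarith
      calc Real.sqrt (a ^ 2 + b ^ 2) ≤ Real.sqrt (((Real.cos θ)⁻¹ * a) ^ 2) :=
            Real.sqrt_le_sqrt h1
        _ = (Real.cos θ)⁻¹ * a := Real.sqrt_sq (by positivity)
  constructor
  · apply Real.sSup_le _ hnonnegA
    rintro r ⟨x, hx, rfl⟩
    exact le_trans (key x hx).1 (le_csSup hbA ⟨x, hx, rfl⟩)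
  · apply Real.sSup_le _ (by positivity)
    rintro r ⟨x, hx, rfl⟩
    refine le_trans (key x hx).2 ?_
    exact mul_le_mul_of_nonneg_left (le_csSup hbB ⟨x, hx, rfl⟩) (inv_nonneg.mpr hcos.le)
end
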